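/- arXiv:1107.0745 — 6 statements merged into one kernel-verified Lean document; each statement's English description precedes it below -/
import Mathlib

section
/- There exist constants c₁, c₂ > 0 such that for all x ∈ (0, 1], c₁ / (x · (log(4/x))^{3/2}) ≤ ∫₂^∞ e^{-xξ} / (log ξ)^{3/2} dξ ≤ c₂ / (x · (log(4/x))^{3/2}). -/
open MeasureTheory Set

private lemma integral_exp_neg_mul_Ioi' {x : ℝ} (hx : 0 < x) (a : ℝ) :
    (∫ ξ in Ioi a, Real.exp (-(x*ξ))) = x⁻¹ * Real.exp (-(x*a)) := by
  have h := integral_comp_mul_left_Ioi (fun t => Real.exp (-t)) a hx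
  simpa [smul_eq_mul, integral_exp_neg_Ioi, integral_exp_Iic] using h

/-- `∫₂^∞ e^{-xξ}/(log ξ)^{3/2} dξ ≈ 1/(x·(log(4/x))^{3/2})` for `x ∈ (0,1]`. -/
theorem integral_exp_div_log_rpow_comp :
    ∃ c₁ > (0:ℝ), ∃ c₂ > (0:ℝ), ∀ x : ℝ, 0 < x → x ≤ 1 →
      c₁ / (x * (Real.log (4/x)) ^ ((3:ℝ)/2)) ≤
        (∫ ξ in Set.Ioi (2:ℝ), Real.exp (-(x*ξ)) / (Real.log ξ) ^ ((3:ℝ)/2)) ∧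
      (∫ ξ in Set.Ioi (2:ℝ), Real.exp (-(x*ξ)) / (Real.log ξ) ^ ((3:ℝ)/2)) ≤
        c₂ / (x * (Real.log (4/x)) ^ ((3:ℝ)/2)) := by
  have l2pos : (0:ℝ) < Real.log 2 := Real.log_pos one_lt_two
  refine ⟨4 * Real.exp (-8) / 2 ^ ((3:ℝ)/2), by positivity,
    4 * 3 ^ ((3:ℝ)/2) * ((Real.log 2) ^ ((3:ℝ)/2))⁻¹ + 2 ^ ((3:ℝ)/2), by positivity,
    fun x hx hx1 => ?_⟩
  set f : ℝ → ℝ := fun ξ => Real.exp (-(x*ξ)) / (Real.log ξ) ^ ((3:ℝ)/2) with hf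
  set L : ℝ := Real.log (4/x) with hLdef
  have h4x : (4:ℝ) ≤ 4 / x := by rw [le_div_iff₀ hx]; nlinarith
  have h4xpos : (0:ℝ) < 4 / x := by positivity
  have hL1 : (1:ℝ) < L := by
    calc (1:ℝ) < Real.log 4 := by
          rw [Real.lt_log_iff_exp_lt (by norm_num)]
          calc Real.exp 1 < 2.7182818286 := Real.exp_one_lt_d9
            _ < 4 := by norm_num
      _ ≤ L := Real.log_le_log (by norm_num) h4x
  have hL0 : (0:ℝ) < L := by linarith
  have hLp : (0:ℝ) < L ^ ((3:ℝ)/2) := Real.rpow_pos_of_pos hL0 _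
  -- measurability
  have hmeas : Measurable f := by
    apply Measurable.div
    · exact (measurable_const.mul measurable_id).neg.exp
    · exact Real.measurable_log.pow_const _
  -- integrability on Ioi 2
  have hint : IntegrableOn f (Ioi 2) := by
    apply Integrable.mono' (g := fun ξ => ((Real.log 2) ^ ((3:ℝ)/2))⁻¹ * Real.exp (-x * ξ))
    · exact (exp_neg_integrableOn_Ioi 2 hx).const_mul _
    · exact hmeas.aestronglyMeasurable
    · filter_upwards [ae_restrict_mem measurableSet_Ioi] with ξ hξ
      have hξ2 : (2:ℝ) < ξ := hξ
      have hlog : Real.log 2 ≤ Real.log ξ := Real.log_le_log (by norm_num) hξ2.le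
      have hlogpos : (0:ℝ) < Real.log ξ := lt_of_lt_of_le l2pos hlog
      have hd : (Real.log 2) ^ ((3:ℝ)/2) ≤ (Real.log ξ) ^ ((3:ℝ)/2) :=
        Real.rpow_le_rpow l2pos.le hlog (by norm_num)
      have hdpos : (0:ℝ) < (Real.log ξ) ^ ((3:ℝ)/2) := Real.rpow_pos_of_pos hlogpos _
      rw [Real.norm_eq_abs, abs_of_nonneg (by positivity), hf]
      simp only [neg_mul, div_eq_mul_inv]
      rw [mul_comm]
      gcongr
  constructor
  · -- lower bound
    have hsub : Ioc (4/x) (8/x) ⊆ Ioi (2:ℝ) := fun ξ hξ =>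
      mem_Ioi.mpr (lt_trans (lt_of_lt_of_le (by norm_num) h4x) hξ.1)
    have hnonneg : 0 ≤ᵐ[volume.restrict (Ioi 2)] f := by
      filter_upwards [ae_restrict_mem measurableSet_Ioi] with ξ hξ
      have h2ξ : (2:ℝ) < ξ := hξ
      have hlogpos : (0:ℝ) < Real.log ξ := Real.log_pos (by linarith)
      rw [hf]
      positivity
    have hmono := setIntegral_mono_set hint hnonneg (HasSubset.Subset.eventuallyLE hsub)
    have hvol : (volume (Ioc (4/x) (8/x))).toReal = 4/x := by
      rw [Real.volume_Ioc, div_sub_div_same, show (8:ℝ)-4 = 4 by norm_num,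
        ENNReal.toReal_ofReal h4xpos.le]
    have key : Real.exp (-8) / (2*L) ^ ((3:ℝ)/2) * (volume (Ioc (4/x) (8/x))).toReal
        ≤ ∫ ξ in Ioc (4/x) (8/x), f ξ := by
      apply setIntegral_ge_of_const_le_real measurableSet_Ioc measure_Ioc_lt_top.ne ?_
        (hint.mono_set hsub)
      intro ξ hξ
      obtain ⟨h1, h2⟩ := hξ
      have hξ4 : (4:ℝ) ≤ ξ := le_trans h4x h1.le
      have hlogpos : (0:ℝ) < Real.log ξ := Real.log_pos (by linarith)
      have hxξ : x * ξ ≤ 8 := by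
        have h := (le_div_iff₀ hx).mp h2
        nlinarith
      have hexp : Real.exp (-8) ≤ Real.exp (-(x*ξ)) := Real.exp_le_exp.mpr (by linarith)
      have hlogle : Real.log ξ ≤ 2 * L := by
        have h8 : Real.log (8/x) = Real.log 2 + L := by
          rw [show (8:ℝ)/x = 2 * (4/x) by ring, Real.log_mul (by norm_num) (ne_of_gt h4xpos)]
      -- log ξ ≤ log (8/x) = log 2 + L ≤ 2L
        have hl2 : Real.log 2 ≤ L := by
          have := Real.log_two_lt_d9
          linarith
        have := Real.log_le_log (by linarith : (0:ℝ) < ξ) h2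
        linarith
      have hrp : (Real.log ξ) ^ ((3:ℝ)/2) ≤ (2*L) ^ ((3:ℝ)/2) :=
        Real.rpow_le_rpow hlogpos.le hlogle (by norm_num)
      exact div_le_div₀ (Real.exp_pos _).le hexp (Real.rpow_pos_of_pos hlogpos _) hrp
    calc (4 * Real.exp (-8) / 2 ^ ((3:ℝ)/2)) / (x * L ^ ((3:ℝ)/2))
        = Real.exp (-8) / (2*L) ^ ((3:ℝ)/2) * (volume (Ioc (4/x) (8/x))).toReal := by
          rw [hvol, Real.mul_rpow (by norm_num) hL0.le]
          have h2p : (0:ℝ) < (2:ℝ) ^ ((3:ℝ)/2) := by positivity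
          field_simp
      _ ≤ ∫ ξ in Ioc (4/x) (8/x), f ξ := key
      _ ≤ ∫ ξ in Ioi 2, f ξ := hmono
  · -- upper bound
    set A : ℝ := (4/x) ^ ((1:ℝ)/2) with hA
    have h4half : (4:ℝ) ^ ((1:ℝ)/2) = 2 := by
      rw [show (4:ℝ) = 2^(2:ℕ) by norm_num, ← Real.rpow_natCast 2 2,
        ← Real.rpow_mul (by norm_num)]
      norm_num
    have hA2 : (2:ℝ) ≤ A := by
      rw [← h4half]; exact Real.rpow_le_rpow (by norm_num) h4x (by norm_num)
    have hApos : (0:ℝ) < A := by positivity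
    have hAsq : A * A = 4 / x := by
      rw [hA, ← Real.rpow_add h4xpos]; norm_num
    have hlogA : Real.log A = L / 2 := by
      rw [hA, Real.log_rpow h4xpos]; ring
    have hsplit : (∫ ξ in Ioi (2:ℝ), f ξ) = (∫ ξ in Ioc 2 A, f ξ) + ∫ ξ in Ioi A, f ξ := by
      rw [← Ioc_union_Ioi_eq_Ioi hA2]
      exact setIntegral_union (Ioc_disjoint_Ioi le_rfl) measurableSet_Ioi
        (hint.mono_set Ioc_subset_Ioi_self) (hint.mono_set (Ioi_subset_Ioi hA2))
    set K : ℝ := ((Real.log 2) ^ ((3:ℝ)/2))⁻¹ with hK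
    have hKpos : (0:ℝ) < K := by positivity
    have hI1 : (∫ ξ in Ioc 2 A, f ξ) ≤ K * A := by
      have hb := norm_setIntegral_le_of_norm_le_const (μ := volume) (s := Ioc 2 A) (f := f)
        (C := K) measure_Ioc_lt_top ?_
      · calc (∫ ξ in Ioc 2 A, f ξ) ≤ ‖∫ ξ in Ioc 2 A, f ξ‖ := le_abs_self _
          _ ≤ K * (volume (Ioc 2 A)).toReal := hb
          _ ≤ K * A := by
              rw [Real.volume_Ioc, ENNReal.toReal_ofReal (by linarith)]
              nlinarith
      · intro ξ hξ
        have hξ2 : (2:ℝ) < ξ := hξ.1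
        have hlog : Real.log 2 ≤ Real.log ξ := Real.log_le_log (by norm_num) hξ2.le
        have hlogpos : (0:ℝ) < Real.log ξ := lt_of_lt_of_le l2pos hlog
        have hd : (Real.log 2) ^ ((3:ℝ)/2) ≤ (Real.log ξ) ^ ((3:ℝ)/2) :=
          Real.rpow_le_rpow l2pos.le hlog (by norm_num)
        rw [Real.norm_eq_abs, abs_of_nonneg (by rw [hf]; positivity), hf]
        simp only [div_eq_mul_inv]
        calc Real.exp (-(x*ξ)) * ((Real.log ξ) ^ ((3:ℝ)/2))⁻¹
            ≤ 1 * K := by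
              apply mul_le_mul
              · exact Real.exp_le_one_iff.mpr (by nlinarith)
              · rw [hK]
                exact inv_anti₀ (by positivity) hd
              · positivity
              · norm_num
          _ = K := one_mul K
    have hlogle3 : L ≤ 3 * (4/x) ^ ((1:ℝ)/3) := by
      have h := Real.log_le_rpow_div h4xpos.le (by norm_num : (0:ℝ) < 1/3)
      have : (4/x) ^ ((1:ℝ)/3) / ((1:ℝ)/3) = 3 * (4/x) ^ ((1:ℝ)/3) := by ring
      rw [this] at h
      exact h
    have hLp_le : L ^ ((3:ℝ)/2) ≤ 3 ^ ((3:ℝ)/2) * A := by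
      calc L ^ ((3:ℝ)/2) ≤ (3 * (4/x) ^ ((1:ℝ)/3)) ^ ((3:ℝ)/2) :=
            Real.rpow_le_rpow hL0.le hlogle3 (by norm_num)
        _ = 3 ^ ((3:ℝ)/2) * A := by
            rw [Real.mul_rpow (by norm_num) (by positivity), ← Real.rpow_mul h4xpos.le, hA]
            norm_num
    have hI1' : K * A ≤ (4 * 3 ^ ((3:ℝ)/2) * K) / (x * L ^ ((3:ℝ)/2)) := by
      rw [le_div_iff₀ (by positivity)]
      calc K * A * (x * L ^ ((3:ℝ)/2)) ≤ K * A * (x * (3 ^ ((3:ℝ)/2) * A)) := by gcongr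
        _ = 3 ^ ((3:ℝ)/2) * K * (x * (A * A)) := by ring
        _ = 4 * 3 ^ ((3:ℝ)/2) * K := by
            rw [hAsq]
            field_simp
    have hI2 : (∫ ξ in Ioi A, f ξ) ≤ 2 ^ ((3:ℝ)/2) / (x * L ^ ((3:ℝ)/2)) := by
      have hmono2 : ∀ ξ ∈ Ioi A, f ξ ≤
          Real.exp (-(x*ξ)) * (2 ^ ((3:ℝ)/2) / L ^ ((3:ℝ)/2)) := by
        intro ξ hξ
        have hAξ : A < ξ := hξ
        have hξpos : (0:ℝ) < ξ := lt_trans hApos hAξ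
        have hlogA' : L/2 ≤ Real.log ξ := hlogA ▸ Real.log_le_log hApos hAξ.le
        have hlogpos : (0:ℝ) < Real.log ξ := lt_of_lt_of_le (by linarith) hlogA'
        have h1 : (L/2) ^ ((3:ℝ)/2) ≤ (Real.log ξ) ^ ((3:ℝ)/2) :=
          Real.rpow_le_rpow (by positivity) hlogA' (by norm_num)
        have h2 : (L/2) ^ ((3:ℝ)/2) = L ^ ((3:ℝ)/2) / 2 ^ ((3:ℝ)/2) :=
          Real.div_rpow hL0.le (le_of_lt two_pos) _
        have hinv : ((Real.log ξ) ^ ((3:ℝ)/2))⁻¹ ≤ 2 ^ ((3:ℝ)/2) / L ^ ((3:ℝ)/2) := by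
          have := inv_anti₀ (by positivity : (0:ℝ) < (L/2) ^ ((3:ℝ)/2)) h1
          rwa [h2, inv_div] at this
        rw [hf, div_eq_mul_inv]
        exact mul_le_mul_of_nonneg_left hinv (Real.exp_pos _).le
      have hgint : IntegrableOn (fun ξ => Real.exp (-(x*ξ)) * (2 ^ ((3:ℝ)/2) / L ^ ((3:ℝ)/2)))
          (Ioi A) := by
        have := (exp_neg_integrableOn_Ioi A hx).mul_const (2 ^ ((3:ℝ)/2) / L ^ ((3:ℝ)/2))
        simpa [neg_mul, IntegrableOn] using this
      calc (∫ ξ in Ioi A, f ξ)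
          ≤ ∫ ξ in Ioi A, Real.exp (-(x*ξ)) * (2 ^ ((3:ℝ)/2) / L ^ ((3:ℝ)/2)) :=
            setIntegral_mono_on (hint.mono_set (Ioi_subset_Ioi hA2)) hgint
              measurableSet_Ioi hmono2
        _ = (x⁻¹ * Real.exp (-(x*A))) * (2 ^ ((3:ℝ)/2) / L ^ ((3:ℝ)/2)) := by
            rw [integral_mul_const, integral_exp_neg_mul_Ioi' hx]
        _ ≤ (x⁻¹ * 1) * (2 ^ ((3:ℝ)/2) / L ^ ((3:ℝ)/2)) := by
            gcongr
            exact Real.exp_le_one_iff.mpr (by nlinarith)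
        _ = 2 ^ ((3:ℝ)/2) / (x * L ^ ((3:ℝ)/2)) := by
            rw [mul_one]
            field_simp
      
    rw [hsplit]
    calc (∫ ξ in Ioc 2 A, f ξ) + ∫ ξ in Ioi A, f ξ
        ≤ (4 * 3 ^ ((3:ℝ)/2) * K) / (x * L ^ ((3:ℝ)/2)) + 2 ^ ((3:ℝ)/2) / (x * L ^ ((3:ℝ)/2)) :=
          add_le_add (le_trans hI1 hI1') hI2
      _ = (4 * 3 ^ ((3:ℝ)/2) * K + 2 ^ ((3:ℝ)/2)) / (x * L ^ ((3:ℝ)/2)) := by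
          rw [← add_div]
end

section
/- Let V : (0,∞) → (0,∞) satisfy c₁ ≤ V(x)·(log(1+x^{-α}))^{1/2} ≤ c₂ and c₁ ≤ V'(x)·x·(log(1+x^{-α/3}))^{3/2} ≤ c₂ for all x > 0, where 0 < α ≤ 2. Then there are constants c₃,c₄ > 0 such that for all x > 0, c₃ · V(x)/(x·log(2 + 1/x)) ≤ V'(x) ≤ c₄ · V(x)/(x·log(2 + 1/x)). -/
open MeasureTheory

lemma log1p_le (u : ℝ) (hu : 0 ≤ u) : Real.log (1 + u) ≤ u := by
  have h := Real.log_le_sub_one_of_pos (show (0:ℝ) < 1 + u by linarith)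
  linarith

lemma le_log1p (u : ℝ) (hu : 0 ≤ u) : u / (1 + u) ≤ Real.log (1 + u) := by
  have h1 : (0:ℝ) < 1 + u := by linarith
  have h := Real.log_le_sub_one_of_pos (show (0:ℝ) < (1+u)⁻¹ by positivity)
  rw [Real.log_inv] at h
  have h3 : u / (1+u) = 1 - (1+u)⁻¹ := by field_simp; ring
  rw [h3]; linarith

set_option maxHeartbeats 1000000 in
lemma log_comparison (α : ℝ) (hα : 0 < α) (hα2 : α ≤ 2) :
    ∃ m > (0:ℝ), ∃ M > (0:ℝ), ∀ x : ℝ, 0 < x →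
      m * (Real.log (1 + x ^ (-(α/3))))^3 ≤
        (Real.log (2 + 1/x))^2 * Real.log (1 + x ^ (-α)) ∧
      (Real.log (2 + 1/x))^2 * Real.log (1 + x ^ (-α)) ≤
        M * (Real.log (1 + x ^ (-(α/3))))^3 := by
  have l2 : (0:ℝ) < Real.log 2 := Real.log_pos (by norm_num)
  have l3 : (0:ℝ) < Real.log 3 := Real.log_pos (by norm_num)
  have l23 : Real.log 2 ≤ Real.log 3 := Real.log_le_log (by norm_num) (by norm_num)
  refine ⟨min ((Real.log 2)^2/2) (min ((Real.log 2 / Real.log 3)^3) (27*α/125)), ?_,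
    max (8*(Real.log 3)^2) (3*(Real.log 3/Real.log 2 + 3/α)^2), ?_, ?_⟩
  · have : (0:ℝ) < Real.log 2 / Real.log 3 := by positivity
    positivity
  · positivity
  intro x hx
  set s : ℝ := x ^ (-(α/3)) with hs_def
  have hs : 0 < s := Real.rpow_pos_of_pos hx _
  have hcube : x ^ (-α) = s ^ 3 := by
    rw [hs_def, ← Real.rpow_natCast (x ^ (-(α/3))) 3, ← Real.rpow_mul hx.le]
    norm_num
  set L : ℝ := Real.log (1 + s) with hL_def
  set M3 : ℝ := Real.log (1 + x ^ (-α)) with hM3_def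
  set G : ℝ := Real.log (2 + 1/x) with hG_def
  have hM3s : M3 = Real.log (1 + s^3) := by rw [hM3_def, hcube]
  have hLpos : 0 < L := Real.log_pos (by linarith)
  have hM3pos : 0 < M3 := Real.log_pos (by
    have := Real.rpow_pos_of_pos hx (-α); linarith)
  have hGpos : 0 < G := Real.log_pos (by
    have : 0 < 1/x := by positivity
    linarith)
  have hMle : M3 ≤ 3 * L := by
    have h1 : (1:ℝ) + s^3 ≤ (1+s)^3 := by nlinarith [hs.le, sq_nonneg s]
    have h2 : Real.log (1 + s^3) ≤ Real.log ((1+s)^3) :=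
      Real.log_le_log (by positivity) h1
    rw [Real.log_pow] at h2
    rw [hM3s]; push_cast at h2 ⊢; linarith
  constructor
  case left =>
    -- lower bound : m * L^3 ≤ G^2 * M3
    have hmin : ∀ v : ℝ,
        ((Real.log 2)^2/2) * L^3 ≤ v ∨ ((Real.log 2 / Real.log 3)^3) * L^3 ≤ v ∨
          (27*α/125) * L^3 ≤ v →
        min ((Real.log 2)^2/2) (min ((Real.log 2 / Real.log 3)^3) (27*α/125)) * L^3 ≤ v := by
      intro v h
      have h1 := min_le_left ((Real.log 2)^2/2) (min ((Real.log 2 / Real.log 3)^3) (27*α/125))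
      have hL3 : (0:ℝ) ≤ L^3 := by positivity
      rcases h with h | h | h
      · nlinarith [mul_le_mul_of_nonneg_right h1 hL3]
      · have := min_le_left ((Real.log 2 / Real.log 3)^3) (27*α/125)
        have h1' := (min_le_right ((Real.log 2)^2/2) _).trans this
        nlinarith [mul_le_mul_of_nonneg_right h1' hL3]
      · have := min_le_right ((Real.log 2 / Real.log 3)^3) (27*α/125)
        have h1' := (min_le_right ((Real.log 2)^2/2) _).trans this
        nlinarith [mul_le_mul_of_nonneg_right h1' hL3]
    apply hmin
    rcases le_or_gt 1 x with hx1 | hx1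
    · -- x ≥ 1 : use (log2)^2/2
      left
      have hs1 : s ≤ 1 := Real.rpow_le_one_of_one_le_of_nonpos hx1 (by linarith)
      have hGge : Real.log 2 ≤ G := by
        rw [hG_def]
        refine Real.log_le_log (by norm_num) ?_
        have : 0 < 1/x := by positivity
        linarith
      have hLle : L ≤ s := log1p_le _ hs.le
      have hM3ge : s^3/2 ≤ M3 := by
        have h1 := le_log1p (s^3) (by positivity)
        have hs31 : s^3 ≤ 1 := pow_le_one₀ (n:=3) hs.le hs1
        have h2 : s^3/2 ≤ s^3/(1+s^3) := by
          rw [div_le_div_iff₀ (by norm_num) (by positivity)]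
          nlinarith [mul_le_mul_of_nonneg_left hs31 (pow_nonneg hs.le 3)]
        rw [hM3s]; linarith
      have hL3 : L^3 ≤ s^3 := pow_le_pow_left₀ hLpos.le hLle 3
      have e1 : (Real.log 2)^2 ≤ G^2 := pow_le_pow_left₀ l2.le hGge 2
      have e3 : (Real.log 2)^2 * (s^3/2) ≤ G^2 * M3 :=
        mul_le_mul e1 hM3ge (by positivity) (sq_nonneg G)
      have e4 : (Real.log 2)^2/2 * L^3 ≤ (Real.log 2)^2/2 * s^3 :=
        mul_le_mul_of_nonneg_left hL3 (by positivity)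
      linarith
    · rcases le_or_gt x (1/2) with hx2 | hx2
      · -- x ≤ 1/2 : use 27α/125
        right; right
        set t : ℝ := -Real.log x with ht_def
        have hlogx : Real.log x ≤ -Real.log 2 := by
          have := Real.log_le_log hx (by linarith : x ≤ 1/2)
          rw [show (1/2:ℝ) = 2⁻¹ by norm_num, Real.log_inv] at this
          linarith
        have ht : Real.log 2 ≤ t := by rw [ht_def]; linarith
        have ht0 : 0 < t := lt_of_lt_of_le l2 ht
        have hGge : t ≤ G := by
          have h1 : Real.log (1/x) ≤ Real.log (2 + 1/x) :=
            Real.log_le_log (by positivity) (by linarith [hx.le])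
          have h2 : Real.log (1/x) = t := by rw [one_div, Real.log_inv, ht_def]
          rw [hG_def]; linarith
        have hM3ge : α * t ≤ M3 := by
          have h1 : Real.log (x ^ (-α)) ≤ M3 := by
            rw [hM3_def]
            refine Real.log_le_log (Real.rpow_pos_of_pos hx _) (by
              have := Real.rpow_pos_of_pos hx (-α); linarith)
          rw [Real.log_rpow hx] at h1
          rw [ht_def]; linarith
        have hLle : L ≤ (1 + α/3) * t := by
          have hs1 : 1 ≤ s := Real.one_le_rpow_of_pos_of_le_one_of_nonpos hx (by linarith) (by linarith)
          have h1 : L ≤ Real.log (2*s) := by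
            rw [hL_def]; exact Real.log_le_log (by linarith) (by linarith)
          rw [Real.log_mul (by norm_num) (ne_of_gt hs), hs_def, Real.log_rpow hx] at h1
          have : -(α/3) * Real.log x = (α/3) * t := by rw [ht_def]; ring
          rw [this] at h1
          linarith
        have hLcube : L^3 ≤ ((1+α/3)*t)^3 := pow_le_pow_left₀ hLpos.le hLle 3
        have h53 : (1+α/3) ≤ 5/3 := by linarith
        have hG2 : t^2 ≤ G^2 := pow_le_pow_left₀ ht0.le hGge 2
        have key : α * t^3 ≤ G^2 * M3 := by
          have h1 : t^2 * (α*t) ≤ G^2 * M3 :=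
            mul_le_mul hG2 hM3ge (by positivity) (sq_nonneg G)
          have h2 : t^2 * (α*t) = α * t^3 := by ring
          linarith
        have hLc : L^3 ≤ (125/27) * t^3 := by
          have h1 : ((1+α/3)*t)^3 ≤ (5/3*t)^3 := by
            apply pow_le_pow_left₀ (by positivity) (by nlinarith) 3
          have h2 : (5/3*t)^3 = (125/27) * t^3 := by ring
          linarith
        have h3 : 27*α/125 * L^3 ≤ 27*α/125 * ((125/27) * t^3) :=
          mul_le_mul_of_nonneg_left hLc (by positivity)
        have h4 : 27*α/125 * ((125/27) * t^3) = α * t^3 := by ring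
        exact le_trans (h4 ▸ h3) key
      · -- 1/2 < x < 1 : use (log2/log3)^3
        right; left
        have hx1' : x ≤ 1 := hx1.le
        have hGge : Real.log 2 ≤ G := by
          rw [hG_def]
          refine Real.log_le_log (by norm_num) ?_
          have : 0 < 1/x := by positivity
          linarith
        have hM3ge : Real.log 2 ≤ M3 := by
          rw [hM3_def]
          refine Real.log_le_log (by norm_num) ?_
          have : 1 ≤ x ^ (-α) := Real.one_le_rpow_of_pos_of_le_one_of_nonpos hx hx1' (by linarith)
          linarith
        have hs2 : s ≤ 2 := by
          have hlogs : Real.log s ≤ Real.log 2 := by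
            rw [hs_def, Real.log_rpow hx]
            have h1 : -Real.log x ≤ Real.log 2 := by
              have := Real.log_le_log (by norm_num : (0:ℝ) < 1/2) (le_of_lt hx2)
              rw [show (1/2:ℝ) = 2⁻¹ by norm_num, Real.log_inv] at this
              linarith
            have h2 : 0 ≤ -Real.log x := by
              have := Real.log_nonpos hx.le hx1'
              linarith
            nlinarith [hα, hα2]
          exact (Real.log_le_log_iff hs (by norm_num)).mp hlogs
        have hLle : L ≤ Real.log 3 := by
          rw [hL_def]; exact Real.log_le_log (by linarith) (by linarith)
        have hL3 : L^3 ≤ (Real.log 3)^3 := pow_le_pow_left₀ hLpos.le hLle 3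
        have key : (Real.log 2)^3 ≤ G^2 * M3 := by
          have h1 : (Real.log 2)^2 * Real.log 2 ≤ G^2 * M3 :=
            mul_le_mul (pow_le_pow_left₀ l2.le hGge 2) hM3ge l2.le (sq_nonneg G)
          have h2 : (Real.log 2)^2 * Real.log 2 = (Real.log 2)^3 := by ring
          linarith
        have e1 : (Real.log 2 / Real.log 3)^3 * L^3 ≤ (Real.log 2 / Real.log 3)^3 * (Real.log 3)^3 :=
          mul_le_mul_of_nonneg_left hL3 (by positivity)
        have e2 : (Real.log 2 / Real.log 3)^3 * (Real.log 3)^3 = (Real.log 2)^3 := by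
          field_simp
        linarith
  case right =>
    have hL3nn : (0:ℝ) ≤ L^3 := by positivity
    have hmax : ∀ v : ℝ,
        v ≤ (8*(Real.log 3)^2) * L^3 ∨ v ≤ (3*(Real.log 3/Real.log 2 + 3/α)^2) * L^3 →
        v ≤ max (8*(Real.log 3)^2) (3*(Real.log 3/Real.log 2 + 3/α)^2) * L^3 := by
      intro v h
      rcases h with h | h
      · exact h.trans (mul_le_mul_of_nonneg_right (le_max_left _ _) hL3nn)
      · exact h.trans (mul_le_mul_of_nonneg_right (le_max_right _ _) hL3nn)
    apply hmax
    rcases le_or_gt 1 x with hx1 | hx1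
    · -- x ≥ 1
      left
      have hs1 : s ≤ 1 := Real.rpow_le_one_of_one_le_of_nonpos hx1 (by linarith)
      have hinv : 1/x ≤ 1 := by rw [div_le_one hx]; linarith
      have hGle : G ≤ Real.log 3 := by
        rw [hG_def]; exact Real.log_le_log (by positivity) (by linarith)
      have hM3le : M3 ≤ s^3 := by rw [hM3s]; exact log1p_le _ (by positivity)
      have hLge : s/2 ≤ L := by
        have h1 := le_log1p s hs.le
        have h2 : s/2 ≤ s/(1+s) := by
          rw [div_le_div_iff₀ (by norm_num) (by positivity)]
          nlinarith [mul_le_mul_of_nonneg_left hs1 hs.le]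
        rw [hL_def]; linarith
      have e1 : G^2 ≤ (Real.log 3)^2 := pow_le_pow_left₀ hGpos.le hGle 2
      have e2 : G^2*M3 ≤ (Real.log 3)^2 * s^3 :=
        mul_le_mul e1 hM3le hM3pos.le (by positivity)
      have e3 : (s/2)^3 ≤ L^3 := pow_le_pow_left₀ (by positivity) hLge 3
      have e4 : (Real.log 3)^2 * s^3 ≤ (Real.log 3)^2 * (8 * L^3) := by
        apply mul_le_mul_of_nonneg_left ?_ (by positivity)
        nlinarith [e3]
      have e5 : (Real.log 3)^2 * (8 * L^3) = (8*(Real.log 3)^2) * L^3 := by ring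
      linarith
    · -- x ≤ 1
      right
      set t : ℝ := -Real.log x with ht_def
      have ht0 : 0 ≤ t := by
        rw [ht_def]
        have := Real.log_nonpos hx.le hx1.le
        linarith
      have hs1 : 1 ≤ s := Real.one_le_rpow_of_pos_of_le_one_of_nonpos hx hx1.le (by linarith)
      have hLge2 : Real.log 2 ≤ L := by
        rw [hL_def]; exact Real.log_le_log (by norm_num) (by linarith)
      have hLget : (α/3) * t ≤ L := by
        have h1 : Real.log s ≤ L := by
          rw [hL_def]; exact Real.log_le_log hs (by linarith)
        rw [hs_def, Real.log_rpow hx] at h1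
        rw [ht_def]; linarith
      have hGle : G ≤ Real.log 3 + t := by
        have h1 : (2:ℝ) + 1/x ≤ 3/x := by
          rw [le_div_iff₀ hx]
          have h1x : (1/x)*x = 1 := by field_simp
          nlinarith [hx1.le]
        have h2 : Real.log (2 + 1/x) ≤ Real.log (3/x) := by
          apply Real.log_le_log ?_ h1
          have : 0 < 1/x := by positivity
          linarith
        rw [Real.log_div (by norm_num) (ne_of_gt hx)] at h2
        rw [hG_def, ht_def]; linarith
      set C : ℝ := Real.log 3/Real.log 2 + 3/α with hC_def
      have hCpos : 0 < C := by rw [hC_def]; positivity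
      have hGC : G ≤ C * L := by
        have h1 : Real.log 3 ≤ (Real.log 3/Real.log 2) * L := by
          rw [div_mul_eq_mul_div, le_div_iff₀ l2]
          nlinarith [hLge2, l3.le]
        have h2 : t ≤ (3/α) * L := by
          have h3 : (3/α) * ((α/3)*t) ≤ (3/α) * L :=
            mul_le_mul_of_nonneg_left hLget (div_nonneg (by norm_num) hα.le)
          have h4 : (3/α) * ((α/3)*t) = t := by field_simp
          linarith
        have h5 : (Real.log 3/Real.log 2) * L + (3/α) * L = C * L := by
          rw [hC_def]; ring
        exact hGle.trans (le_of_le_of_eq (add_le_add h1 h2) h5)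
      have e1 : G^2 ≤ (C*L)^2 := pow_le_pow_left₀ hGpos.le hGC 2
      have e2 : G^2 * M3 ≤ (C*L)^2 * (3*L) :=
        mul_le_mul e1 hMle hM3pos.le (by positivity)
      have e3 : (C*L)^2 * (3*L) = (3*C^2) * L^3 := by ring
      linarith

set_option maxHeartbeats 1000000 in
/-- From `V(x) ≈ (log(1+x^{-α}))^{-1/2}` and `V'(x) ≈ 1/(x (log(1+x^{-α/3}))^{3/2})`
one deduces `V'(x) ≈ V(x)/(x log(2+1/x))`. -/
theorem deriv_renewal_comp (α : ℝ) (hα : 0 < α) (hα2 : α ≤ 2)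
    (V Vp : ℝ → ℝ) (c₁ c₂ : ℝ) (hc₁ : 0 < c₁) (hc₂ : 0 < c₂)
    (hderiv : ∀ x : ℝ, 0 < x → HasDerivAt V (Vp x) x)
    (hV : ∀ x : ℝ, 0 < x →
      c₁ ≤ V x * (Real.log (1 + x ^ (-α))) ^ ((1:ℝ)/2) ∧
      V x * (Real.log (1 + x ^ (-α))) ^ ((1:ℝ)/2) ≤ c₂)
    (hVp : ∀ x : ℝ, 0 < x →
      c₁ ≤ Vp x * x * (Real.log (1 + x ^ (-(α/3)))) ^ ((3:ℝ)/2) ∧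
      Vp x * x * (Real.log (1 + x ^ (-(α/3)))) ^ ((3:ℝ)/2) ≤ c₂) :
    ∃ c₃ > (0:ℝ), ∃ c₄ > (0:ℝ), ∀ x : ℝ, 0 < x →
      c₃ * (V x / (x * Real.log (2 + 1/x))) ≤ Vp x ∧
      Vp x ≤ c₄ * (V x / (x * Real.log (2 + 1/x))) := by
  obtain ⟨m, hm, M, hM, hkey⟩ := log_comparison α hα hα2
  have hsm : 0 < Real.sqrt m := Real.sqrt_pos.mpr hm
  have hsM : 0 < Real.sqrt M := Real.sqrt_pos.mpr hM
  refine ⟨c₁ * Real.sqrt m / c₂, div_pos (mul_pos hc₁ hsm) hc₂,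
    c₂ * Real.sqrt M / c₁, div_pos (mul_pos hc₂ hsM) hc₁, ?_⟩
  intro x hx
  obtain ⟨hQ1, hQ2⟩ := hV x hx
  obtain ⟨hP1, hP2⟩ := hVp x hx
  obtain ⟨hk1, hk2⟩ := hkey x hx
  set L : ℝ := Real.log (1 + x ^ (-(α/3))) with hL_def
  set M3 : ℝ := Real.log (1 + x ^ (-α)) with hM3_def
  set G : ℝ := Real.log (2 + 1/x) with hG_def
  have hsα : 0 < x ^ (-(α/3)) := Real.rpow_pos_of_pos hx _
  have hsα2 : 0 < x ^ (-α) := Real.rpow_pos_of_pos hx _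
  have hL : 0 < L := Real.log_pos (by linarith)
  have hM3 : 0 < M3 := Real.log_pos (by linarith)
  have hG : 0 < G := Real.log_pos (by
    have : 0 < 1/x := by positivity
    linarith)
  set Ls : ℝ := L ^ ((3:ℝ)/2) with hLs_def
  set Ms : ℝ := M3 ^ ((1:ℝ)/2) with hMs_def
  have hLs : 0 < Ls := Real.rpow_pos_of_pos hL _
  have hMs : 0 < Ms := Real.rpow_pos_of_pos hM3 _
  have hVpos : 0 < V x := by
    by_contra h
    push_neg at h
    have : V x * Ms ≤ 0 := mul_nonpos_of_nonpos_of_nonneg h hMs.le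
    linarith
  have hVppos : 0 < Vp x := by
    by_contra h
    push_neg at h
    have : Vp x * x * Ls ≤ 0 :=
      mul_nonpos_of_nonpos_of_nonneg (mul_nonpos_of_nonpos_of_nonneg h hx.le) hLs.le
    linarith
  have hsqL : Real.sqrt (L^3) = Ls := by
    rw [Real.sqrt_eq_rpow, hLs_def, ← Real.rpow_natCast L 3, ← Real.rpow_mul hL.le]
    norm_num
  have hsqM : Real.sqrt M3 = Ms := by
    rw [Real.sqrt_eq_rpow, hMs_def]
  have hsq1 : Real.sqrt m * Ls ≤ G * Ms := by
    have e1 : Real.sqrt (m * L^3) ≤ Real.sqrt (G^2 * M3) := Real.sqrt_le_sqrt hk1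
    rwa [Real.sqrt_mul hm.le, Real.sqrt_mul (sq_nonneg G), Real.sqrt_sq hG.le,
      hsqL, hsqM] at e1
  have hsq2 : G * Ms ≤ Real.sqrt M * Ls := by
    have e1 : Real.sqrt (G^2 * M3) ≤ Real.sqrt (M * L^3) := Real.sqrt_le_sqrt hk2
    rwa [Real.sqrt_mul hM.le, Real.sqrt_mul (sq_nonneg G), Real.sqrt_sq hG.le,
      hsqL, hsqM] at e1
  have hxG : 0 < x * G := mul_pos hx hG
  constructor
  · rw [← mul_div_assoc, div_le_iff₀ hxG]
    have main : (c₁ * Real.sqrt m / c₂ * V x) * Ms ≤ (Vp x * (x * G)) * Ms := by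
      have A1 : (c₁ * Real.sqrt m / c₂) * (V x * Ms) ≤ (c₁ * Real.sqrt m / c₂) * c₂ :=
        mul_le_mul_of_nonneg_left hQ2 (by positivity)
      have A2 : (c₁ * Real.sqrt m / c₂) * c₂ = Real.sqrt m * c₁ := by
        field_simp
      have A3 : Real.sqrt m * c₁ ≤ Real.sqrt m * (Vp x * x * Ls) :=
        mul_le_mul_of_nonneg_left hP1 (Real.sqrt_nonneg m)
      have A4 : Real.sqrt m * (Vp x * x * Ls) = (Vp x * x) * (Real.sqrt m * Ls) := by ring
      have A5 : (Vp x * x) * (Real.sqrt m * Ls) ≤ (Vp x * x) * (G * Ms) :=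
        mul_le_mul_of_nonneg_left hsq1 (mul_pos hVppos hx).le
      have A6 : (Vp x * x) * (G * Ms) = (Vp x * (x * G)) * Ms := by ring
      have A7 : (c₁ * Real.sqrt m / c₂ * V x) * Ms = (c₁ * Real.sqrt m / c₂) * (V x * Ms) := by
        ring
      linarith
    exact le_of_mul_le_mul_right main hMs
  · rw [← mul_div_assoc, le_div_iff₀ hxG]
    have main : (Vp x * (x * G)) * Ms ≤ (c₂ * Real.sqrt M / c₁ * V x) * Ms := by
      have B1 : (Vp x * (x * G)) * Ms = (Vp x * x) * (G * Ms) := by ring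
      have B2 : (Vp x * x) * (G * Ms) ≤ (Vp x * x) * (Real.sqrt M * Ls) :=
        mul_le_mul_of_nonneg_left hsq2 (mul_pos hVppos hx).le
      have B3 : (Vp x * x) * (Real.sqrt M * Ls) = Real.sqrt M * (Vp x * x * Ls) := by ring
      have B4 : Real.sqrt M * (Vp x * x * Ls) ≤ Real.sqrt M * c₂ :=
        mul_le_mul_of_nonneg_left hP2 (Real.sqrt_nonneg M)
      have B5 : Real.sqrt M * c₂ = (c₂ * Real.sqrt M / c₁) * c₁ := by
        field_simp
      have B6 : (c₂ * Real.sqrt M / c₁) * c₁ ≤ (c₂ * Real.sqrt M / c₁) * (V x * Ms) := by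
        apply mul_le_mul_of_nonneg_left hQ1 (by positivity)
      have B7 : (c₂ * Real.sqrt M / c₁) * (V x * Ms) = (c₂ * Real.sqrt M / c₁ * V x) * Ms := by
        ring
      linarith
    exact le_of_mul_le_mul_right main hMs
end

section
/- There exist constants c₁, c₂ > 0 such that for every r ∈ (0,1], c₁ · (log(1+1/r))^{-1} ≤ ∫_r^{3r/2} (1/((y−r)·(log(1+1/(y−r)))²)) dy ≤ c₂ · (log(1+1/r))^{-1}. -/
open MeasureTheory Set Filter Topology

/-- `∫_r^{3r/2} dy/((y-r)·log²(1+1/(y-r))) ≈ 1/log(1+1/r)` for `r ∈ (0,1]`. -/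
theorem integral_near_boundary_comp :
    ∃ c₁ > (0:ℝ), ∃ c₂ > (0:ℝ), ∀ r : ℝ, 0 < r → r ≤ 1 →
      c₁ * (Real.log (1 + 1/r))⁻¹ ≤
        (∫ y in r..(3*r/2), 1 / ((y - r) * (Real.log (1 + 1/(y - r)))^2)) ∧
      (∫ y in r..(3*r/2), 1 / ((y - r) * (Real.log (1 + 1/(y - r)))^2)) ≤
        c₂ * (Real.log (1 + 1/r))⁻¹ := by
  refine ⟨1/2, by norm_num, 3/2, by norm_num, fun r hr hr1 => ?_⟩
  set b : ℝ := 3*r/2 with hb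
  have hrb : r < b := by rw [hb]; linarith
  set F : ℝ → ℝ := fun y => (Real.log (1 + 1/(y - r)))⁻¹ with hF
  set G : ℝ → ℝ := fun y => ((y - r) * ((y - r) + 1) * (Real.log (1 + 1/(y - r)))^2)⁻¹ with hG
  set H : ℝ → ℝ := fun y => 1 / ((y - r) * (Real.log (1 + 1/(y - r)))^2) with hH
  -- basic positivity facts
  have hL : ∀ y : ℝ, r < y → 0 < Real.log (1 + 1/(y - r)) := by
    intro y hy
    apply Real.log_pos
    have : 0 < 1/(y - r) := div_pos one_pos (by linarith)
    linarith
  -- derivative of F is G on (r, ∞)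
  have hderiv : ∀ y : ℝ, r < y → HasDerivAt F (G y) y := by
    intro y hy
    have hu : (0:ℝ) < y - r := by linarith
    have hu' : y - r ≠ 0 := ne_of_gt hu
    have hLpos := hL y hy
    have hLne : Real.log (1 + 1/(y - r)) ≠ 0 := ne_of_gt hLpos
    have h1 : HasDerivAt (fun z : ℝ => z - r) 1 y := (hasDerivAt_id y).sub_const r
    have h2 : HasDerivAt (fun z : ℝ => (z - r)⁻¹) (-1 / (y - r)^2) y := by
      simpa using h1.fun_inv hu'
    have h3 : HasDerivAt (fun z : ℝ => 1 + (z - r)⁻¹) (-1 / (y - r)^2) y :=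
      h2.const_add 1
    have hinvpos : (0:ℝ) < (y - r)⁻¹ := inv_pos.2 hu
    have h4ne : (1 : ℝ) + (y - r)⁻¹ ≠ 0 := by linarith
    have h4 : HasDerivAt (fun z : ℝ => Real.log (1 + (z - r)⁻¹))
        ((-1 / (y - r)^2) / (1 + (y - r)⁻¹)) y := h3.log h4ne
    have hLne' : Real.log (1 + (y - r)⁻¹) ≠ 0 := by
      simpa [one_div] using hLne
    have h5 : HasDerivAt (fun z : ℝ => (Real.log (1 + (z - r)⁻¹))⁻¹)
        (-((-1 / (y - r)^2) / (1 + (y - r)⁻¹)) / Real.log (1 + (y - r)⁻¹) ^ 2) y :=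
      h4.fun_inv hLne'
    have hFeq : F = fun z : ℝ => (Real.log (1 + (z - r)⁻¹))⁻¹ := by
      funext z; simp [hF, one_div]
    rw [hFeq]
    convert h5 using 1
    simp only [hG]
    have harg : 1 + 1/(y - r) = 1 + (y - r)⁻¹ := by rw [one_div]
    rw [harg]
    have hu1 : (y - r) + 1 ≠ 0 := by linarith
    generalize hLl : Real.log (1 + (y - r)⁻¹) = L at hLne' ⊢
    field_simp
  -- continuity of F on [r, b]
  have hFr : F r = 0 := by simp [hF]
  have hcont : ContinuousOn F (Icc r b) := by
    intro y hy
    rcases eq_or_lt_of_le hy.1 with h | h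
    · subst h
      have htop : Tendsto F (𝓝[>] r) (𝓝 0) := by
        have t1 : Tendsto (fun z : ℝ => z - r) (𝓝[>] r) (𝓝[>] 0) := by
          rw [tendsto_nhdsWithin_iff]
          constructor
          · have : Tendsto (fun z : ℝ => z - r) (𝓝 r) (𝓝 0) := by
              simpa using (continuous_sub_right r).tendsto r
            exact this.mono_left nhdsWithin_le_nhds
          · filter_upwards [self_mem_nhdsWithin] with z hz
            exact sub_pos.2 (show r < z from hz)
        have t2 : Tendsto (fun z : ℝ => 1/(z - r)) (𝓝[>] r) atTop := by
          simpa [one_div, Function.comp_def] using tendsto_inv_nhdsGT_zero.comp t1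
        have t3 : Tendsto (fun z : ℝ => 1 + 1/(z - r)) (𝓝[>] r) atTop :=
          tendsto_atTop_add_const_left _ 1 t2
        have t4 : Tendsto (fun z : ℝ => Real.log (1 + 1/(z - r))) (𝓝[>] r) atTop :=
          Real.tendsto_log_atTop.comp t3
        exact t4.inv_tendsto_atTop
      have hIci : Tendsto F (𝓝[Ici r] r) (𝓝 0) := by
        rw [← Ioi_insert, nhdsWithin_insert, tendsto_sup]
        refine ⟨?_, htop⟩
        simpa [hFr] using (tendsto_pure_nhds F r)
      have : Tendsto F (𝓝[Icc r b] r) (𝓝 0) :=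
        hIci.mono_left (nhdsWithin_mono r Icc_subset_Ici_self)
      simpa [ContinuousWithinAt, hFr] using this
    · have hu : (0:ℝ) < y - r := by linarith
      have hLne : Real.log (1 + 1/(y - r)) ≠ 0 := ne_of_gt (hL y h)
      have : ContinuousAt F y := by
        have c0 : ContinuousAt (fun z : ℝ => z - r) y :=
          (continuous_id.sub continuous_const).continuousAt
        have c1 : ContinuousAt (fun z : ℝ => 1 + 1/(z - r)) y :=
          continuousAt_const.add (continuousAt_const.div c0 (ne_of_gt hu))
        have hdivpos : (0:ℝ) < 1/(y - r) := div_pos one_pos hu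
        have hne : (1:ℝ) + 1/(y - r) ≠ 0 := by linarith
        exact (c1.log hne).inv₀ hLne
      exact this.continuousWithinAt
  -- G is nonnegative on [r, ∞)
  have hGnonneg : ∀ y : ℝ, r ≤ y → 0 ≤ G y := by
    intro y h
    rcases eq_or_lt_of_le h with h' | h'
    · subst h'; simp [hG]
    · have hu : (0:ℝ) < y - r := by linarith
      have hLp := hL y h'
      have : (0:ℝ) < (y - r) * ((y - r) + 1) * (Real.log (1 + 1/(y - r)))^2 :=
        mul_pos (mul_pos hu (by linarith)) (pow_pos hLp 2)
      exact le_of_lt (inv_pos.2 this)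
  -- integrability of G
  have hGIoc : IntegrableOn G (Ioc r b) :=
    intervalIntegral.integrableOn_deriv_of_nonneg hcont
      (fun x hx => hderiv x hx.1) (fun x hx => hGnonneg x hx.1.le)
  have hGint : IntervalIntegrable G volume r b := by
    rw [intervalIntegrable_iff_integrableOn_Ioc_of_le hrb.le]; exact hGIoc
  -- FTC
  have hFTC : ∫ y in r..b, G y = F b - F r :=
    intervalIntegral.integral_eq_sub_of_hasDerivAt_of_le hrb.le hcont
      (fun x hx => hderiv x hx.1) hGint
  -- relation between H and G
  have hHG : ∀ y : ℝ, r < y → H y = ((y - r) + 1) * G y := by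
    intro y hy
    have hu : (0:ℝ) < y - r := by linarith
    have hu' : y - r ≠ 0 := ne_of_gt hu
    have hLne : Real.log (1 + 1/(y - r)) ≠ 0 := ne_of_gt (hL y hy)
    have hu1 : (y - r) + 1 ≠ 0 := by linarith
    simp only [hH, hG]
    generalize Real.log (1 + 1/(y - r)) = L at hLne ⊢
    field_simp
  have hbound : ∀ y ∈ Icc r b, G y ≤ H y ∧ H y ≤ 3/2 * G y := by
    intro y hy
    rcases eq_or_lt_of_le hy.1 with h | h
    · constructor <;> simp [hH, hG, ← h]
    · have hu : (0:ℝ) < y - r := by linarith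
      have hub : y - r ≤ 1/2 := by
        have := hy.2; rw [hb] at this; linarith
      have hGn := hGnonneg y hy.1
      rw [hHG y h]
      constructor
      · nlinarith
      · nlinarith
  -- integrability of H
  have hHcont : ContinuousOn H (Ioc r b) := by
    intro y hy
    have hu : (0:ℝ) < y - r := by linarith [hy.1]
    have hLne : Real.log (1 + 1/(y - r)) ≠ 0 := ne_of_gt (hL y hy.1)
    have : ContinuousAt H y := by
      have c0 : ContinuousAt (fun z : ℝ => z - r) y :=
        (continuous_id.sub continuous_const).continuousAt
      have c1 : ContinuousAt (fun z : ℝ => 1 + 1/(z - r)) y :=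
        continuousAt_const.add (continuousAt_const.div c0 (ne_of_gt hu))
      have hdivpos : (0:ℝ) < 1/(y - r) := div_pos one_pos hu
      have hne : (1:ℝ) + 1/(y - r) ≠ 0 := by linarith
      have c2 : ContinuousAt (fun z : ℝ => Real.log (1 + 1/(z - r))) y :=
        c1.log hne
      have hden : (y - r) * (Real.log (1 + 1/(y - r)))^2 ≠ 0 :=
        ne_of_gt (mul_pos hu (pow_pos (hL y hy.1) 2))
      exact continuousAt_const.div (c0.mul (c2.pow 2)) hden
    exact this.continuousWithinAt
  have hHIoc : IntegrableOn H (Ioc r b) := by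
    apply Integrable.mono' (hGIoc.const_mul (3/2 : ℝ))
      (hHcont.aestronglyMeasurable measurableSet_Ioc)
    rw [ae_restrict_iff' measurableSet_Ioc]
    filter_upwards with y hy
    have h1 := (hbound y ⟨hy.1.le, hy.2⟩).2
    have h0 : 0 ≤ H y := le_trans (hGnonneg y hy.1.le) (hbound y ⟨hy.1.le, hy.2⟩).1
    rw [Real.norm_of_nonneg h0]
    exact h1
  have hHint : IntervalIntegrable H volume r b := by
    rw [intervalIntegrable_iff_integrableOn_Ioc_of_le hrb.le]; exact hHIoc
  -- compare integrals
  have hlow : ∫ y in r..b, G y ≤ ∫ y in r..b, H y :=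
    intervalIntegral.integral_mono_on hrb.le hGint hHint
      (fun y hy => (hbound y hy).1)
  have hhigh : ∫ y in r..b, H y ≤ 3/2 * ∫ y in r..b, G y := by
    have := intervalIntegral.integral_mono_on hrb.le hHint (hGint.const_mul (3/2 : ℝ))
      (fun y hy => (hbound y hy).2)
    simpa [intervalIntegral.integral_const_mul] using this
  -- compute ∫ G
  have hFb : F b = (Real.log (1 + 2/r))⁻¹ := by
    have hbr : b - r = r/2 := by rw [hb]; ring
    rw [hF]
    simp only
    rw [hbr, show 1/(r/2) = 2/r by rw [one_div_div]]
  have hGval : ∫ y in r..b, G y = (Real.log (1 + 2/r))⁻¹ := by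
    rw [hFTC, hFb, hFr, sub_zero]
  -- log comparisons
  have h1r : (0:ℝ) < 1/r := div_pos one_pos hr
  have h2r : (0:ℝ) < 2/r := div_pos two_pos hr
  have hL1 : 0 < Real.log (1 + 1/r) := Real.log_pos (by linarith)
  have hL2 : 0 < Real.log (1 + 2/r) := Real.log_pos (by linarith)
  have hle12 : Real.log (1 + 1/r) ≤ Real.log (1 + 2/r) := by
    apply Real.log_le_log (by linarith)
    rw [show (2:ℝ)/r = 1/r + 1/r by ring]
    linarith
  have hle2 : Real.log (1 + 2/r) ≤ 2 * Real.log (1 + 1/r) := by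
    have hsq : (0:ℝ) ≤ (1/r)^2 := sq_nonneg _
    have hexp : ((1:ℝ) + 1/r)^2 = 1 + 2/r + (1/r)^2 := by ring
    have h1 : (1:ℝ) + 2/r ≤ (1 + 1/r)^2 := by rw [hexp]; linarith
    calc Real.log (1 + 2/r) ≤ Real.log ((1 + 1/r)^2) :=
          Real.log_le_log (by linarith) h1
      _ = 2 * Real.log (1 + 1/r) := by
          rw [Real.log_pow]; norm_num
  constructor
  · calc (1/2 : ℝ) * (Real.log (1 + 1/r))⁻¹
        = (2 * Real.log (1 + 1/r))⁻¹ := by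
          rw [mul_inv]; norm_num
      _ ≤ (Real.log (1 + 2/r))⁻¹ := inv_anti₀ hL2 hle2
      _ = ∫ y in r..b, G y := hGval.symm
      _ ≤ ∫ y in r..b, H y := hlow
  · calc (∫ y in r..b, H y) ≤ 3/2 * ∫ y in r..b, G y := hhigh
      _ = 3/2 * (Real.log (1 + 2/r))⁻¹ := by rw [hGval]
      _ ≤ 3/2 * (Real.log (1 + 1/r))⁻¹ := by
          have := inv_anti₀ hL1 hle12
          linarith
end

section
/- There exist constants c₁, c₂ > 0 such that for all 0 < z < x ≤ 1/2, c₁ · (log(1+1/z))^{-1/2} · log(1 + x/z) ≤ ∫₀^{x/2} (log(1 + 1/y))^{-1/2} / (y+z) dy ≤ c₂ · (log(1+1/z))^{-1/2} · log(1 + x/z). -/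
set_option maxHeartbeats 4000000

open MeasureTheory


lemma one_lt_arg {y : ℝ} (hy : 0 < y) : 1 < 1 + 1/y := by
  have : 0 < 1/y := by positivity
  linarith

lemma log_ge_one {y : ℝ} (hy : 0 < y) (hy2 : y ≤ 1/2) : 1 ≤ Real.log (1 + 1/y) := by
  have h3 : (3:ℝ) ≤ 1 + 1/y := by
    have : (2:ℝ) ≤ 1/y := by
      rw [le_div_iff₀ hy]; linarith
    linarith
  have he : Real.exp 1 ≤ 3 := by
    have := Real.exp_one_lt_d9; linarith
  calc (1:ℝ) = Real.log (Real.exp 1) := (Real.log_exp 1).symm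
    _ ≤ Real.log (1 + 1/y) := Real.log_le_log (Real.exp_pos 1) (he.trans h3)

lemma V_nonneg {y : ℝ} (hy : 0 < y) : 0 ≤ (Real.log (1 + 1/y)) ^ (-(1:ℝ)/2) :=
  Real.rpow_nonneg (Real.log_nonneg (one_lt_arg hy).le) _

lemma V_eq {y : ℝ} (hy : 0 < y) :
    (Real.log (1 + 1/y)) ^ (-(1:ℝ)/2) = 1 / Real.sqrt (Real.log (1 + 1/y)) := by
  have h0 : 0 ≤ Real.log (1 + 1/y) := Real.log_nonneg (one_lt_arg hy).le
  rw [Real.sqrt_eq_rpow, show (-(1:ℝ)/2) = -(1/2) by ring, Real.rpow_neg h0]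
  exact (one_div _).symm

lemma V_mono {a b : ℝ} (ha : 0 < a) (hab : a ≤ b) :
    (Real.log (1 + 1/a)) ^ (-(1:ℝ)/2) ≤ (Real.log (1 + 1/b)) ^ (-(1:ℝ)/2) := by
  have hb : 0 < b := ha.trans_le hab
  have h1 : (0:ℝ) < 1 + 1/b := by positivity
  have h2 : 1 + 1/b ≤ 1 + 1/a := by
    have := one_div_le_one_div_of_le ha hab
    linarith
  have hlb : 0 < Real.log (1 + 1/b) := Real.log_pos (one_lt_arg hb)
  have hle : Real.log (1 + 1/b) ≤ Real.log (1 + 1/a) := Real.log_le_log h1 h2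
  exact Real.rpow_le_rpow_of_nonpos hlb hle (by norm_num)

lemma V_le_one {y : ℝ} (hy : 0 < y) (hy2 : y ≤ 1/2) :
    (Real.log (1 + 1/y)) ^ (-(1:ℝ)/2) ≤ 1 := by
  have h1 := log_ge_one hy hy2
  calc (Real.log (1 + 1/y)) ^ (-(1:ℝ)/2) ≤ (1:ℝ) ^ (-(1:ℝ)/2) :=
        Real.rpow_le_rpow_of_nonpos one_pos h1 (by norm_num)
    _ = 1 := Real.one_rpow _

lemma deriv_G {y : ℝ} (hy : 0 < y) :
    HasDerivAt (fun t : ℝ => -2 * Real.sqrt (Real.log (1 + 1/t)))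
      ((Real.log (1 + 1/y)) ^ (-(1:ℝ)/2) / (y * (y+1))) y := by
  have hy' : y ≠ 0 := hy.ne'
  have harg : (0:ℝ) < 1 + 1/y := lt_trans one_pos (one_lt_arg hy)
  have hlog : 0 < Real.log (1 + 1/y) := Real.log_pos (one_lt_arg hy)
  have h1 : HasDerivAt (fun t : ℝ => 1 + 1/t) (-(y^2)⁻¹) y := by
    simpa [one_div] using (hasDerivAt_inv hy').const_add 1
  have h2 : HasDerivAt (fun t : ℝ => Real.log (1 + 1/t)) (-(y^2)⁻¹ / (1 + 1/y)) y :=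
    h1.log harg.ne'
  have h3 := (h2.sqrt hlog.ne').const_mul (-2 : ℝ)
  refine h3.congr_deriv ?_
  have hs : 0 < Real.sqrt (Real.log (1 + 1/y)) := Real.sqrt_pos.mpr hlog
  rw [show (Real.log (1 + 1/y)) ^ (-(1:ℝ)/2) = 1 / Real.sqrt (Real.log (1 + 1/y)) by
    rw [Real.sqrt_eq_rpow, show (-(1:ℝ)/2) = -(1/2) by ring, Real.rpow_neg hlog.le]
    exact (one_div _).symm]
  generalize Real.sqrt (Real.log (1 + 1/y)) = s at hs ⊢
  have h1y : 0 < 1 + 1/y := harg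
  field_simp

lemma contOn_G' {a b : ℝ} (ha : 0 < a) :
    ContinuousOn (fun y : ℝ => (Real.log (1 + 1/y)) ^ (-(1:ℝ)/2) / (y * (y+1)))
      (Set.Icc a b) := by
  have hsub : ∀ y ∈ Set.Icc a b, 0 < y := fun y hy => lt_of_lt_of_le ha hy.1
  have hlog : ContinuousOn (fun y : ℝ => Real.log (1 + 1/y)) (Set.Icc a b) := by
    apply ContinuousOn.log
    · exact continuousOn_const.add (continuousOn_const.div continuousOn_id
        (fun y hy => (hsub y hy).ne'))
    · intro y hy
      exact (lt_trans one_pos (one_lt_arg (hsub y hy))).ne'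
  apply ContinuousOn.div
  · apply ContinuousOn.rpow_const hlog
    intro y hy
    exact Or.inl (Real.log_pos (one_lt_arg (hsub y hy))).ne'
  · exact (continuousOn_id.mul (continuousOn_id.add continuousOn_const))
  · intro y hy
    have := hsub y hy
    positivity

lemma ftc_G {a b : ℝ} (ha : 0 < a) (hab : a ≤ b) :
    ∫ y in a..b, (Real.log (1 + 1/y)) ^ (-(1:ℝ)/2) / (y * (y+1)) =
      2 * Real.sqrt (Real.log (1 + 1/a)) - 2 * Real.sqrt (Real.log (1 + 1/b)) := by
  have h := intervalIntegral.integral_eq_sub_of_hasDerivAt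
    (f := fun t : ℝ => -2 * Real.sqrt (Real.log (1 + 1/t)))
    (f' := fun y : ℝ => (Real.log (1 + 1/y)) ^ (-(1:ℝ)/2) / (y * (y+1)))
    (fun y hy => by
      have : 0 < y := by
        rcases hy with ⟨h1, h2⟩
        rw [inf_eq_left.mpr hab] at h1
        exact lt_of_lt_of_le ha h1
      exact deriv_G this)
    (by
      apply ContinuousOn.intervalIntegrable
      rw [Set.uIcc_of_le hab]
      exact contOn_G' ha)
  rw [h]; ring

lemma intInt_f {z b : ℝ} (hz : 0 < z) (hb : 0 ≤ b) (hb2 : b ≤ 1/2) :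
    IntervalIntegrable (fun y : ℝ => (Real.log (1 + 1/y)) ^ (-(1:ℝ)/2) / (y + z))
      volume 0 b := by
  have hmeas : Measurable (fun y : ℝ => (Real.log (1 + 1/y)) ^ (-(1:ℝ)/2) / (y + z)) := by
    apply Measurable.div
    · exact (Measurable.log (measurable_const.add (measurable_const.div measurable_id)))
        |>.pow_const _
    · exact measurable_id.add_const z
  rw [intervalIntegrable_iff, Set.uIoc_of_le hb]
  apply MeasureTheory.Integrable.mono' (g := fun _ : ℝ => 1/z)
  · exact integrableOn_const measure_Ioc_lt_top.ne
  · exact hmeas.aestronglyMeasurable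
  · rw [ae_restrict_iff' measurableSet_Ioc]
    filter_upwards with y hy
    rcases hy with ⟨h1, h2⟩
    have hV0 : 0 ≤ (Real.log (1 + 1/y)) ^ (-(1:ℝ)/2) := V_nonneg h1
    have hV1 : (Real.log (1 + 1/y)) ^ (-(1:ℝ)/2) ≤ 1 := V_le_one h1 (le_trans h2 hb2)
    have hyz : 0 < y + z := by linarith
    rw [Real.norm_eq_abs, abs_of_nonneg (by positivity)]
    exact div_le_div₀ (by norm_num) hV1 hz (by linarith)

lemma f_zero {z : ℝ} : (Real.log (1 + 1/(0:ℝ))) ^ (-(1:ℝ)/2) / ((0:ℝ) + z) = 0 := by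
  norm_num

lemma f_nonneg {z y : ℝ} (hz : 0 < z) (hy : 0 ≤ y) :
    0 ≤ (Real.log (1 + 1/y)) ^ (-(1:ℝ)/2) / (y + z) := by
  rcases eq_or_lt_of_le hy with h | h
  · rw [← h, f_zero]
  · exact div_nonneg (V_nonneg h) (by linarith)

lemma quarter_pow {z x : ℝ} (hz : 0 < z) (hzx : z < x) :
    (1/2) * (Real.log (1 + 1/z)) ^ (-(1:ℝ)/2) ≤ (Real.log (1 + 1/(x/4))) ^ (-(1:ℝ)/2) := by
  have hx : 0 < x := hz.trans hzx
  have harg : (1:ℝ) < 1 + 1/(x/4) := one_lt_arg (by linarith)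
  have hq : 0 < Real.log (1 + 1/(x/4)) := Real.log_pos harg
  have hA0 : 0 ≤ Real.log (1 + 1/z) := Real.log_nonneg (one_lt_arg hz).le
  have hle : Real.log (1 + 1/(x/4)) ≤ 4 * Real.log (1 + 1/z) := by
    have h1 : 1 + 1/(x/4) ≤ (1 + 1/z)^(4:ℕ) := by
      have h2 : 1/(x/4) ≤ 4/z := by
        rw [div_le_div_iff₀ (by linarith) hz]
        nlinarith
      have h3 : 0 < 1/z := by positivity
      calc 1 + 1/(x/4) ≤ 1 + 4 * (1/z) := by
            rw [show (4:ℝ) * (1/z) = 4/z by ring]; linarith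
        _ ≤ (1 + 1/z)^(4:ℕ) := by nlinarith [sq_nonneg (1/z), pow_pos h3 2]
    calc Real.log (1 + 1/(x/4)) ≤ Real.log ((1 + 1/z)^(4:ℕ)) :=
          Real.log_le_log (by linarith) h1
      _ = 4 * Real.log (1 + 1/z) := by rw [Real.log_pow]; norm_num
  have step : (4 * Real.log (1 + 1/z)) ^ (-(1:ℝ)/2) ≤ (Real.log (1 + 1/(x/4))) ^ (-(1:ℝ)/2) :=
    Real.rpow_le_rpow_of_nonpos hq hle (by norm_num)
  have heq : (4 * Real.log (1 + 1/z)) ^ (-(1:ℝ)/2) =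
      (1/2) * (Real.log (1 + 1/z)) ^ (-(1:ℝ)/2) := by
    rw [Real.mul_rpow (by norm_num) hA0]
    congr 1
    rw [show (-(1:ℝ)/2) = -(1/2) by ring, Real.rpow_neg (by norm_num : (0:ℝ) ≤ 4),
      ← Real.sqrt_eq_rpow, show (4:ℝ) = 2^2 by norm_num, Real.sqrt_sq (by norm_num : (0:ℝ) ≤ 2)]
    norm_num
  linarith [step, heq.le]

/-- `∫₀^{x/2} (log(1+1/y))^{-1/2}/(y+z) dy ≈ (log(1+1/z))^{-1/2}·log(1+x/z)`
for `0 < z < x ≤ 1/2`. -/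
theorem integral_I1_comp :
    ∃ c₁ > (0:ℝ), ∃ c₂ > (0:ℝ), ∀ z x : ℝ, 0 < z → z < x → x ≤ 1/2 →
      c₁ * ((Real.log (1 + 1/z)) ^ (-(1:ℝ)/2) * Real.log (1 + x/z)) ≤
        (∫ y in (0:ℝ)..(x/2), (Real.log (1 + 1/y)) ^ (-(1:ℝ)/2) / (y + z)) ∧
      (∫ y in (0:ℝ)..(x/2), (Real.log (1 + 1/y)) ^ (-(1:ℝ)/2) / (y + z)) ≤
        c₂ * ((Real.log (1 + 1/z)) ^ (-(1:ℝ)/2) * Real.log (1 + x/z)) := by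
  refine ⟨1/60, by norm_num, 5, by norm_num, fun z x hz hzx hx2 => ?_⟩
  have hx : 0 < x := hz.trans hzx
  have hzhalf : z ≤ 1/2 := by linarith
  set f : ℝ → ℝ := fun y => (Real.log (1 + 1/y)) ^ (-(1:ℝ)/2) / (y + z) with hfdef
  set g : ℝ → ℝ := fun y => (Real.log (1 + 1/y)) ^ (-(1:ℝ)/2) / (y * (y+1)) with hgdef
  set Vz := (Real.log (1 + 1/z)) ^ (-(1:ℝ)/2) with hVzdef
  set A := Real.log (1 + 1/z) with hAdef
  set L := Real.log (1 + x/z) with hLdef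
  set sA := Real.sqrt A with hsAdef
  have hVz0 : 0 ≤ Vz := V_nonneg hz
  have hA1 : (1:ℝ) ≤ A := log_ge_one hz hzhalf
  have hsA0 : 0 ≤ sA := Real.sqrt_nonneg A
  have hsA2 : sA^2 = A := Real.sq_sqrt (by linarith)
  have hsA1 : (1:ℝ) ≤ sA := by nlinarith
  have hsApos : (0:ℝ) < sA := by linarith
  have hVzeq : Vz = 1 / sA := V_eq hz
  have hxz1 : (1:ℝ) ≤ x/z := le_of_lt ((one_lt_div hz).mpr hzx)
  have hLhalf : (1:ℝ)/2 ≤ L := by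
    have h2 : Real.log 2 ≤ L := Real.log_le_log two_pos (by linarith)
    have := Real.log_two_gt_d9
    linarith
  have hLpos : (0:ℝ) < L := by linarith
  have hVL0 : 0 ≤ Vz * L := mul_nonneg hVz0 hLpos.le
  have hInt : IntervalIntegrable f volume 0 (x/2) := intInt_f hz (by linarith) (by linarith)
  have hIsub : ∀ a b : ℝ, 0 ≤ a → a ≤ b → b ≤ x/2 → IntervalIntegrable f volume a b := by
    intro a b ha hab hb
    apply hInt.mono_set
    rw [Set.uIcc_of_le hab, Set.uIcc_of_le (by linarith)]
    exact Set.Icc_subset_Icc ha hb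
  constructor
  · -- LOWER BOUND
    rcases le_or_gt (5*z) x with hc | hc
    · -- case 5z ≤ x
      have hz2 : z < x/2 := by linarith
      set B := Real.log (1 + 1/(x/2)) with hBdef
      set sB := Real.sqrt B with hsBdef
      have hB1 : (1:ℝ) ≤ B := log_ge_one (by linarith) (by linarith)
      have hBA : B ≤ A := by
        apply Real.log_le_log (by positivity)
        have := one_div_le_one_div_of_le hz hz2.le
        linarith
      have hsB0 : 0 ≤ sB := Real.sqrt_nonneg B
      have hsBA : sB ≤ sA := Real.sqrt_le_sqrt hBA
      have hsB2 : sB^2 = B := Real.sq_sqrt (by linarith)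
      have hsplit : (∫ y in (0:ℝ)..(x/2), f y) =
          (∫ y in (0:ℝ)..z, f y) + ∫ y in z..(x/2), f y :=
        (intervalIntegral.integral_add_adjacent_intervals
          (hIsub 0 z le_rfl hz.le hz2.le) (hIsub z (x/2) hz.le hz2.le le_rfl)).symm
      have hpos1 : 0 ≤ ∫ y in (0:ℝ)..z, f y :=
        intervalIntegral.integral_nonneg hz.le (fun y hy => f_nonneg hz hy.1)
      have hIg : IntervalIntegrable (fun y => (1/2) * g y) volume z (x/2) := by
        apply IntervalIntegrable.const_mul
        apply ContinuousOn.intervalIntegrable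
        rw [Set.uIcc_of_le hz2.le]
        exact contOn_G' hz
      have hmono : (∫ y in z..(x/2), (1/2) * g y) ≤ ∫ y in z..(x/2), f y := by
        apply intervalIntegral.integral_mono_on hz2.le hIg (hIsub z (x/2) hz.le hz2.le le_rfl)
        intro y hy
        obtain ⟨hy1, hy2⟩ := hy
        have hy0 : 0 < y := lt_of_lt_of_le hz hy1
        have hVy0 : 0 ≤ (Real.log (1 + 1/y)) ^ (-(1:ℝ)/2) := V_nonneg hy0
        show (1/2) * ((Real.log (1 + 1/y)) ^ (-(1:ℝ)/2) / (y * (y+1))) ≤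
          (Real.log (1 + 1/y)) ^ (-(1:ℝ)/2) / (y + z)
        rw [show (1/2) * ((Real.log (1 + 1/y)) ^ (-(1:ℝ)/2) / (y * (y+1))) =
          (Real.log (1 + 1/y)) ^ (-(1:ℝ)/2) / (y * (y+1)) / 2 by ring, div_div]
        gcongr
        nlinarith
      have hgval : (∫ y in z..(x/2), (1/2) * g y) = sA - sB := by
        rw [intervalIntegral.integral_const_mul, hgdef, ftc_G hz hz2.le]
        rw [hsAdef, hsBdef, hAdef, hBdef]
        ring
      have hABL : L/4 ≤ A - B := by
        have h1 : B + Real.log (2*x/(5*z)) ≤ A := by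
          rw [hAdef, hBdef, ← Real.log_mul (by positivity) (by positivity)]
          apply Real.log_le_log (by positivity)
          have hexp : (1 + 1/(x/2)) * (2*x/(5*z)) = (2*x + 4)/(5*z) := by
            field_simp
            ring
          rw [hexp]
          have h1z : (2*x + 4)/(5*z) ≤ 1/z := by
            rw [div_le_div_iff₀ (by positivity) hz]
            nlinarith
          have := one_lt_arg hz
          linarith
        have h2 : L ≤ Real.log (2*x/z) := by
          apply Real.log_le_log (by positivity)
          have e1 : 2*x/z = x/z + x/z := by ring
          linarith
        have h3 : Real.log (2*x/z) ≤ 4 * Real.log (2*x/(5*z)) := by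
          have hp : Real.log ((2*x/(5*z))^(4:ℕ)) = 4 * Real.log (2*x/(5*z)) := by
            rw [Real.log_pow]; norm_num
          have hineq : 2*x/z ≤ (2*x/(5*z))^(4:ℕ) := by
            have e : (2*x/(5*z))^(4:ℕ) = 16*x^4/(625*z^4) := by
              field_simp
              ring
            rw [e, div_le_div_iff₀ (by positivity) (by positivity)]
            have hx3 : 125*z^3 ≤ x^3 := by
              have := pow_le_pow_left₀ (by positivity : (0:ℝ) ≤ 5*z) hc 3
              nlinarith [this]
            nlinarith [mul_nonneg (mul_pos hx hz).le (sub_nonneg.mpr hx3),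
              mul_nonneg hx.le (pow_nonneg hz.le 4)]
          calc Real.log (2*x/z) ≤ Real.log ((2*x/(5*z))^(4:ℕ)) :=
                Real.log_le_log (by positivity) hineq
            _ = 4 * Real.log (2*x/(5*z)) := hp
        linarith
      have h8 : (A - B)/(2*sA) ≤ sA - sB := by
        rw [div_le_iff₀ (by positivity)]
        nlinarith [sq_nonneg (sA - sB)]
      have h9 : (1/8)*(Vz*L) = (L/4)/(2*sA) := by
        have hne : sA ≠ 0 := hsApos.ne'
        rw [hVzeq]
        field_simp
        ring
      have h10 : (L/4)/(2*sA) ≤ (A - B)/(2*sA) := by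
        gcongr
      have h11 : (1/60)*(Vz*L) ≤ (1/8)*(Vz*L) := by nlinarith
      linarith
    · -- case x < 5z
      have hq0 : (0:ℝ) < x/4 := by linarith
      set Vq := (Real.log (1 + 1/(x/4))) ^ (-(1:ℝ)/2) with hVqdef
      have hVq0 : 0 ≤ Vq := V_nonneg hq0
      have hsplit : (∫ y in (0:ℝ)..(x/2), f y) =
          (∫ y in (0:ℝ)..(x/4), f y) + ∫ y in (x/4)..(x/2), f y :=
        (intervalIntegral.integral_add_adjacent_intervals
          (hIsub 0 (x/4) le_rfl hq0.le (by linarith))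
          (hIsub (x/4) (x/2) hq0.le (by linarith) le_rfl)).symm
      have hpos1 : 0 ≤ ∫ y in (0:ℝ)..(x/4), f y :=
        intervalIntegral.integral_nonneg hq0.le (fun y hy => f_nonneg hz hy.1)
      have hmono : (∫ y in (x/4)..(x/2), (fun _ : ℝ => Vq/(x/2+z)) y) ≤
          ∫ y in (x/4)..(x/2), f y := by
        apply intervalIntegral.integral_mono_on (by linarith)
          intervalIntegrable_const (hIsub (x/4) (x/2) hq0.le (by linarith) le_rfl)
        intro y hy
        obtain ⟨hy1, hy2⟩ := hy
        have hy0 : 0 < y := lt_of_lt_of_le hq0 hy1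
        have hVy0 : 0 ≤ (Real.log (1 + 1/y)) ^ (-(1:ℝ)/2) := V_nonneg hy0
        show Vq/(x/2+z) ≤ (Real.log (1 + 1/y)) ^ (-(1:ℝ)/2) / (y + z)
        exact div_le_div₀ hVy0 (V_mono hq0 hy1) (by linarith) (by linarith)
      have hcval : (∫ y in (x/4)..(x/2), (fun _ : ℝ => Vq/(x/2+z)) y) =
          (x/2 - x/4) * (Vq/(x/2+z)) := by
        rw [intervalIntegral.integral_const, smul_eq_mul]
      have hsix : Vq/6 ≤ (x/2 - x/4) * (Vq/(x/2+z)) := by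
        have h16 : (1:ℝ)/6 ≤ (x/4)/(x/2+z) := by
          rw [le_div_iff₀ (by positivity)]
          linarith
        have e : (x/2 - x/4) * (Vq/(x/2+z)) = Vq * ((x/4)/(x/2+z)) := by ring
        nlinarith
      have hhalf : (1/2)*Vz ≤ Vq := quarter_pow hz hzx
      have hL5 : L ≤ 5 := by
        have := Real.log_le_sub_one_of_pos (show (0:ℝ) < 1 + x/z by linarith)
        have hxz5 : x/z < 5 := (div_lt_iff₀ hz).mpr (by linarith)
        rw [hLdef]
        linarith
      nlinarith [hsplit, hpos1, hmono, hcval, hsix, hhalf, hL5]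
  · -- UPPER BOUND
    rcases le_or_gt (x/2) z with hu | hu
    · -- case x/2 ≤ z
      have hg2 : IntervalIntegrable (fun y : ℝ => Vz/(y+z)) volume 0 (x/2) := by
        apply ContinuousOn.intervalIntegrable
        apply ContinuousOn.div continuousOn_const (continuousOn_id.add continuousOn_const)
        intro y hy
        rw [Set.uIcc_of_le (by linarith : (0:ℝ) ≤ x/2)] at hy
        have := hy.1
        simp only [Pi.add_apply, id]
        intro hcon
        linarith
      have hmono : (∫ y in (0:ℝ)..(x/2), f y) ≤ ∫ y in (0:ℝ)..(x/2), Vz/(y+z) := by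
        apply intervalIntegral.integral_mono_on (by linarith) hInt hg2
        intro y hy
        obtain ⟨hy1, hy2⟩ := hy
        rcases eq_or_lt_of_le hy1 with h0 | h0
        · show (Real.log (1 + 1/y)) ^ (-(1:ℝ)/2) / (y + z) ≤ Vz/(y+z)
          rw [← h0, f_zero]
          positivity
        · show (Real.log (1 + 1/y)) ^ (-(1:ℝ)/2) / (y + z) ≤ Vz/(y+z)
          gcongr
          exact V_mono h0 (by linarith)
      have hinv : (∫ y in (0:ℝ)..(x/2), (y+z)⁻¹) = Real.log ((x/2+z)/z) := by
        rw [show (∫ y in (0:ℝ)..(x/2), (y+z)⁻¹) = ∫ u in (0+z)..(x/2+z), u⁻¹ from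
          intervalIntegral.integral_comp_add_right (fun u => u⁻¹) z]
        rw [zero_add, integral_inv_of_pos hz (by linarith)]
      have hval : (∫ y in (0:ℝ)..(x/2), Vz/(y+z)) = Vz * Real.log ((x/2+z)/z) := by
        have e1 : (∫ y in (0:ℝ)..(x/2), Vz/(y+z)) = ∫ y in (0:ℝ)..(x/2), Vz * (y+z)⁻¹ :=
          intervalIntegral.integral_congr (fun y _ => div_eq_mul_inv _ _)
        rw [e1, intervalIntegral.integral_const_mul, hinv]
      have hlog : Real.log ((x/2+z)/z) ≤ L := by
        rw [hLdef, show 1 + x/z = (z+x)/z by field_simp]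
        apply Real.log_le_log (by positivity)
        gcongr
      have : Vz * Real.log ((x/2+z)/z) ≤ Vz * L := mul_le_mul_of_nonneg_left hlog hVz0
      linarith
    · -- case z < x/2
      have hsplit : (∫ y in (0:ℝ)..(x/2), f y) =
          (∫ y in (0:ℝ)..z, f y) + ∫ y in z..(x/2), f y :=
        (intervalIntegral.integral_add_adjacent_intervals
          (hIsub 0 z le_rfl hz.le hu.le) (hIsub z (x/2) hz.le hu.le le_rfl)).symm
      have hm1 : (∫ y in (0:ℝ)..z, f y) ≤ Vz := by
        have h1 : (∫ y in (0:ℝ)..z, f y) ≤ ∫ y in (0:ℝ)..z, (fun _ : ℝ => Vz/z) y := by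
          apply intervalIntegral.integral_mono_on hz.le
            (hIsub 0 z le_rfl hz.le hu.le) intervalIntegrable_const
          intro y hy
          obtain ⟨hy1, hy2⟩ := hy
          rcases eq_or_lt_of_le hy1 with h0 | h0
          · show (Real.log (1 + 1/y)) ^ (-(1:ℝ)/2) / (y + z) ≤ Vz/z
            rw [← h0, f_zero]
            positivity
          · show (Real.log (1 + 1/y)) ^ (-(1:ℝ)/2) / (y + z) ≤ Vz/z
            exact div_le_div₀ hVz0 (V_mono h0 hy2) hz (by linarith)
        have h2 : (∫ y in (0:ℝ)..z, (fun _ : ℝ => Vz/z) y) = Vz := by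
          rw [intervalIntegral.integral_const, smul_eq_mul, sub_zero]
          field_simp
        linarith
      set B := Real.log (1 + 1/(x/2)) with hBdef
      set sB := Real.sqrt B with hsBdef
      have hB1 : (1:ℝ) ≤ B := log_ge_one (by linarith) (by linarith)
      have hBA : B ≤ A := by
        apply Real.log_le_log (by positivity)
        have := one_div_le_one_div_of_le hz hu.le
        linarith
      have hsB0 : 0 ≤ sB := Real.sqrt_nonneg B
      have hsBA : sB ≤ sA := Real.sqrt_le_sqrt hBA
      have hsB2 : sB^2 = B := Real.sq_sqrt (by linarith)
      have hIg : IntervalIntegrable (fun y => (5/4) * g y) volume z (x/2) := by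
        apply IntervalIntegrable.const_mul
        apply ContinuousOn.intervalIntegrable
        rw [Set.uIcc_of_le hu.le]
        exact contOn_G' hz
      have hm2 : (∫ y in z..(x/2), f y) ≤ ∫ y in z..(x/2), (5/4) * g y := by
        apply intervalIntegral.integral_mono_on hu.le
          (hIsub z (x/2) hz.le hu.le le_rfl) hIg
        intro y hy
        obtain ⟨hy1, hy2⟩ := hy
        have hy0 : 0 < y := lt_of_lt_of_le hz hy1
        have hVy0 : 0 ≤ (Real.log (1 + 1/y)) ^ (-(1:ℝ)/2) := V_nonneg hy0
        show (Real.log (1 + 1/y)) ^ (-(1:ℝ)/2) / (y + z) ≤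
          (5/4) * ((Real.log (1 + 1/y)) ^ (-(1:ℝ)/2) / (y * (y+1)))
        calc (Real.log (1 + 1/y)) ^ (-(1:ℝ)/2) / (y + z)
            ≤ (Real.log (1 + 1/y)) ^ (-(1:ℝ)/2) / (y * (y+1) * (4/5)) := by
              rw [div_le_div_iff₀ (by linarith) (by nlinarith)]
              apply mul_le_mul_of_nonneg_left _ hVy0
              nlinarith
          _ = (5/4) * ((Real.log (1 + 1/y)) ^ (-(1:ℝ)/2) / (y * (y+1))) := by
              rw [← div_div]
              ring
      have hgval : (∫ y in z..(x/2), (5/4) * g y) = (5/2) * (sA - sB) := by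
        rw [intervalIntegral.integral_const_mul, hgdef, ftc_G hz hu.le]
        rw [hsAdef, hsBdef, hAdef, hBdef]
        ring
      have hABL : A - B ≤ L := by
        have harg : 1 + 1/z ≤ (1 + 1/(x/2)) * (1 + x/z) := by
          have e : (1 + 1/(x/2)) * (1 + x/z) = 1 + x/z + 2/x + 2/z := by
            field_simp
            ring
          have p1 : (0:ℝ) < x/z := by positivity
          have p2 : (0:ℝ) < 2/x := by positivity
          have p3 : (0:ℝ) < 1/z := by positivity
          have p4 : 1/z + 1/z = 2/z := by ring
          rw [e]
          linarith
        have hlm : Real.log ((1 + 1/(x/2)) * (1 + x/z)) = B + L := by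
          rw [Real.log_mul (by positivity) (by positivity)]
        have := Real.log_le_log (by positivity : (0:ℝ) < 1 + 1/z) harg
        rw [hlm] at this
        rw [hAdef, hLdef]
        linarith
      have hsb : (5/2) * (sA - sB) ≤ (5/2) * (Vz * L) := by
        have h1 : sA - sB ≤ L/sA := by
          rw [le_div_iff₀ hsApos]
          nlinarith
        have h2 : L/sA = Vz * L := by
          rw [hVzeq]
          ring
        nlinarith [h1, h2.le]
      have hVz2L : Vz ≤ 2 * (Vz * L) := by
        nlinarith [mul_nonneg hVz0 (by linarith : (0:ℝ) ≤ 2*L - 1)]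
      linarith
end

section
/- There exist constants c₁, c₂ > 0 such that for all 0 < s ≤ 1, c₁/(s·(log(2+1/s))³) ≤ ∫_s² (log(1+1/u))^{-3} / u² du ≤ c₂/(s·(log(2+1/s))³). -/
open MeasureTheory

noncomputable def fV (u : ℝ) : ℝ := 1 / ((Real.log (1 + 1/u))^3 * u^2)
noncomputable def GV (u : ℝ) : ℝ := -(u * (Real.log (1 + 1/u))^3)⁻¹
noncomputable def GV' (u : ℝ) : ℝ :=
  ((Real.log (1+1/u))^3 - 3*(Real.log (1+1/u))^2/(u+1)) / (u * (Real.log (1+1/u))^3)^2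

lemma lg_pos {u : ℝ} (hu : 0 < u) : 0 < Real.log (1 + 1/u) :=
  Real.log_pos (by have := one_div_pos.mpr hu; linarith)

lemma contOn_fV {a b : ℝ} (ha : 0 < a) : ContinuousOn fV (Set.Icc a b) := by
  intro u hu
  have hu0 : 0 < u := lt_of_lt_of_le ha hu.1
  have hL := lg_pos hu0
  apply ContinuousAt.continuousWithinAt
  have h1 : ContinuousAt (fun u : ℝ => 1 + 1/u) u :=
    continuousAt_const.add (continuousAt_const.div continuousAt_id hu0.ne')
  have h2 : ContinuousAt (fun u : ℝ => Real.log (1 + 1/u)) u := h1.log (by positivity)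
  exact continuousAt_const.div ((h2.pow 3).mul (continuousAt_id.pow 2)) (by positivity)

lemma contOn_GV' {a b : ℝ} (ha : 0 < a) : ContinuousOn GV' (Set.Icc a b) := by
  intro u hu
  have hu0 : 0 < u := lt_of_lt_of_le ha hu.1
  have hL := lg_pos hu0
  apply ContinuousAt.continuousWithinAt
  have h1 : ContinuousAt (fun u : ℝ => 1 + 1/u) u :=
    continuousAt_const.add (continuousAt_const.div continuousAt_id hu0.ne')
  have h2 : ContinuousAt (fun u : ℝ => Real.log (1 + 1/u)) u := h1.log (by positivity)
  exact ((h2.pow 3).sub ((continuousAt_const.mul (h2.pow 2)).div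
    (continuousAt_id.add continuousAt_const) (by show u + 1 ≠ 0; positivity))).div
    ((continuousAt_id.mul (h2.pow 3)).pow 2) (by positivity)

lemma intInt_fV {a b : ℝ} (ha : 0 < a) (hab : a ≤ b) : IntervalIntegrable fV volume a b := by
  apply ContinuousOn.intervalIntegrable
  rw [Set.uIcc_of_le hab]; exact contOn_fV ha

lemma intInt_GV' {a b : ℝ} (ha : 0 < a) (hab : a ≤ b) : IntervalIntegrable GV' volume a b := by
  apply ContinuousOn.intervalIntegrable
  rw [Set.uIcc_of_le hab]; exact contOn_GV' ha

lemma hasDerivAt_GV {u : ℝ} (hu : 0 < u) : HasDerivAt GV (GV' u) u := by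
  have hne : u ≠ 0 := hu.ne'
  have h1 : (1 : ℝ) + 1/u ≠ 0 := by positivity
  have hL : 0 < Real.log (1 + 1/u) := lg_pos hu
  have d1 : HasDerivAt (fun u : ℝ => 1 + 1/u) (-(u^2)⁻¹) u := by
    simpa [one_div] using ((hasDerivAt_inv hne).const_add 1)
  have d2 : HasDerivAt (fun u : ℝ => Real.log (1 + 1/u)) (-(u^2)⁻¹ / (1 + 1/u)) u := d1.log h1
  have d3 : HasDerivAt (fun u : ℝ => (Real.log (1 + 1/u))^3)
      (3 * (Real.log (1 + 1/u))^2 * (-(u^2)⁻¹ / (1 + 1/u))) u := by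
    simpa using d2.fun_pow 3
  have d4 : HasDerivAt (fun u : ℝ => u * (Real.log (1 + 1/u))^3)
      (1 * (Real.log (1 + 1/u))^3 + u * (3 * (Real.log (1 + 1/u))^2 * (-(u^2)⁻¹ / (1 + 1/u)))) u :=
    (hasDerivAt_id u).mul d3
  have hden : u * (Real.log (1 + 1/u))^3 ≠ 0 := by positivity
  have d5 := (d4.inv hden).neg
  refine d5.congr_deriv ?_
  unfold GV'
  set L := Real.log (1 + 1/u) with hLdef
  rw [neg_div, neg_neg]
  field_simp
  ring

lemma fV_le_two_GV' {u : ℝ} (hu : 0 < u) (hL6 : 6 ≤ Real.log (1 + 1/u)) :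
    fV u ≤ 2 * GV' u := by
  have hL : 0 < Real.log (1 + 1/u) := lg_pos hu
  set L := Real.log (1 + 1/u) with hLdef
  have h : 2 * GV' u - fV u = L^2 * ((u+1) * L - 6) / ((u+1) * u^2 * L^6) := by
    unfold fV GV'
    rw [← hLdef]
    field_simp
    ring
  have hnum : 0 ≤ L^2 * ((u+1) * L - 6) := by
    apply mul_nonneg (by positivity)
    nlinarith
  have hpos : 0 < (u+1) * u^2 * L^6 := by positivity
  nlinarith [div_nonneg hnum hpos.le]

lemma slog_le {s : ℝ} (hs : 0 < s) (hs1 : s ≤ 1) : s * (Real.log (2 + 1/s))^3 ≤ 81 := by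
  have hinv : 1 ≤ 1/s := by rw [le_div_iff₀ hs]; linarith
  have hx : (3:ℝ) ≤ 2 + 1/s := by linarith
  have hx0 : (0:ℝ) < 2 + 1/s := by linarith
  set x := 2 + 1/s with hxdef
  set y := x ^ ((1:ℝ)/3) with hydef
  have hy1 : (1:ℝ) ≤ y := Real.one_le_rpow (by linarith) (by norm_num)
  have hy0 : (0:ℝ) < y := by linarith
  have hlog : Real.log x = 3 * Real.log y := by
    rw [hydef, Real.log_rpow hx0]; ring
  have hly : Real.log y ≤ y := (Real.log_le_sub_one_of_pos hy0).trans (by linarith)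
  have hly0 : 0 ≤ Real.log y := Real.log_nonneg hy1
  have hcube : y^3 = x := by
    rw [hydef, ← Real.rpow_natCast (x ^ ((1:ℝ)/3)) 3, ← Real.rpow_mul hx0.le]
    norm_num
  have h1 : (Real.log x)^3 ≤ 27 * x := by
    rw [hlog]
    have : (Real.log y)^3 ≤ y^3 := pow_le_pow_left₀ hly0 hly 3
    nlinarith
  have hsx : s * x ≤ 3 := by
    rw [hxdef]; rw [mul_add]; rw [mul_one_div, div_self hs.ne']; linarith
  nlinarith [pow_nonneg (Real.log_nonneg (by linarith : (1:ℝ) ≤ x)) 3]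

lemma h16aux {s : ℝ} (hs : 0 < s)
    (hLs : 0 < Real.log (1 + 1/s)) (hL2 : 0 < Real.log (2 + 1/s))
    (hD : 0 < s * Real.log (2 + 1/s) ^ 3)
    (hhalf : Real.log (2 + 1/s) ≤ 2 * Real.log (1 + 1/s)) :
    2 * (s * (Real.log (1 + 1/s))^3)⁻¹ ≤ 16 / (s * (Real.log (2 + 1/s))^3) := by
  have hLs2 : 0 ≤ Real.log (2 + 1/s) := hL2.le
  rw [inv_eq_one_div, mul_one_div, div_le_div_iff₀ (by positivity) hD]
  have h8 : (Real.log (2 + 1/s))^3 ≤ 8 * (Real.log (1 + 1/s))^3 := by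
    have := pow_le_pow_left₀ hLs2 hhalf 3
    nlinarith
  nlinarith
/-- `∫_s² (log(1+1/u))^{-3}/u² du ≈ 1/(s (log(2+1/s))³)` for `0 < s ≤ 1`. -/
theorem integral_V6_comp :
    ∃ c₁ > (0:ℝ), ∃ c₂ > (0:ℝ), ∀ s : ℝ, 0 < s → s ≤ 1 →
      c₁ / (s * (Real.log (2 + 1/s))^3) ≤
        (∫ u in s..2, 1 / ((Real.log (1 + 1/u))^3 * u^2)) ∧
      (∫ u in s..2, 1 / ((Real.log (1 + 1/u))^3 * u^2)) ≤
        c₂ / (s * (Real.log (2 + 1/s))^3) := by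
  have hlog32 : 0 < Real.log (3/2) := Real.log_pos (by norm_num)
  set K : ℝ := 2 * (Real.exp 12 / (Real.log (3/2))^3) with hK
  have hKpos : 0 < K := by
    rw [hK]
    have := Real.exp_pos (12:ℝ)
    have := pow_pos hlog32 3
    positivity
  refine ⟨1/4, by norm_num, 16 + 81 * K, by positivity, fun s hs hs1 => ?_⟩
  have hs2 : s ≤ 2 := by linarith
  have hinv : 1 ≤ 1/s := by rw [le_div_iff₀ hs]; linarith
  have hLs2 : 0 < Real.log (2 + 1/s) := Real.log_pos (by linarith)
  have hexp6pos : (0:ℝ) < Real.exp (-6) := Real.exp_pos _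
  have hexp6le1 : Real.exp (-6) ≤ 1 := by
    have h := Real.exp_le_exp.mpr (by norm_num : (-6:ℝ) ≤ 0)
    simpa [Real.exp_zero] using h
  have hintegral_rw : (∫ u in s..2, 1 / ((Real.log (1 + 1/u))^3 * u^2)) = ∫ u in s..2, fV u := rfl
  rw [hintegral_rw]
  have hsK : s * (Real.log (2 + 1/s))^3 ≤ 81 := slog_le hs hs1
  have hD : 0 < s * (Real.log (2 + 1/s))^3 := by positivity
  constructor
  · -- lower bound
    have h1 : IntervalIntegrable fV volume s (2*s) := intInt_fV hs (by linarith)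
    have h2 : IntervalIntegrable fV volume (2*s) 2 := intInt_fV (by linarith) (by linarith)
    have hsplit := intervalIntegral.integral_add_adjacent_intervals h1 h2
    have hnn : 0 ≤ ∫ u in (2*s)..2, fV u := by
      apply intervalIntegral.integral_nonneg (by linarith)
      intro u hu
      have hu0 : 0 < u := lt_of_lt_of_le (by linarith) hu.1
      have := lg_pos hu0
      unfold fV; positivity
    have hpt : ∀ u ∈ Set.Icc s (2*s),
        (1 / ((Real.log (2 + 1/s))^3 * (4*s^2))) ≤ fV u := by
      intro u hu
      have hu0 : 0 < u := lt_of_lt_of_le hs hu.1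
      have hLu : 0 < Real.log (1 + 1/u) := lg_pos hu0
      have hmonoL : Real.log (1 + 1/u) ≤ Real.log (2 + 1/s) := by
        apply Real.log_le_log (by positivity)
        have : 1/u ≤ 1/s := one_div_le_one_div_of_le hs hu.1
        linarith
      have hu2 : u^2 ≤ 4*s^2 := by nlinarith [hu.2]
      unfold fV
      apply one_div_le_one_div_of_le (by positivity)
      exact mul_le_mul (pow_le_pow_left₀ hLu.le hmonoL 3) hu2 (by positivity) (by positivity)
    have hmono := intervalIntegral.integral_mono_on (by linarith : s ≤ 2*s)
      intervalIntegrable_const h1 hpt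
    rw [intervalIntegral.integral_const, smul_eq_mul] at hmono
    have heq : (2*s - s) * (1 / ((Real.log (2 + 1/s))^3 * (4*s^2)))
        = (1/4) / (s * (Real.log (2 + 1/s))^3) := by
      rw [show 2*s - s = s by ring, mul_one_div,
        div_eq_div_iff (by positivity) (by positivity)]
      ring
    linarith
  · -- upper bound
    have hbig : ∀ a : ℝ, Real.exp (-6) ≤ a → a ≤ 2 → (∫ u in a..2, fV u) ≤ K := by
      intro a ha ha2
      have ha0 : 0 < a := lt_of_lt_of_le hexp6pos ha
      have hint : IntervalIntegrable fV volume a 2 := intInt_fV ha0 ha2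
      have hpt : ∀ u ∈ Set.Icc a 2, fV u ≤ Real.exp 12 / (Real.log (3/2))^3 := by
        intro u hu
        have hu0 : 0 < u := lt_of_lt_of_le ha0 hu.1
        have hLu : 0 < Real.log (1 + 1/u) := lg_pos hu0
        have hL32 : Real.log (3/2) ≤ Real.log (1 + 1/u) := by
          apply Real.log_le_log (by norm_num)
          have : 1/2 ≤ 1/u := one_div_le_one_div_of_le hu0 hu.2
          linarith
        have hu2 : Real.exp (-6)^2 ≤ u^2 :=
          pow_le_pow_left₀ hexp6pos.le (ha.trans hu.1) 2
        have hexpsq : Real.exp (-6)^2 = Real.exp (-12) := by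
          rw [sq, ← Real.exp_add]; norm_num
        have hprod : (Real.log (3/2))^3 * Real.exp (-12) ≤ (Real.log (1 + 1/u))^3 * u^2 := by
          rw [← hexpsq]
          exact mul_le_mul (pow_le_pow_left₀ hlog32.le hL32 3) hu2 (by positivity) (by positivity)
        have h1 : fV u ≤ 1 / ((Real.log (3/2))^3 * Real.exp (-12)) :=
          one_div_le_one_div_of_le (mul_pos (pow_pos hlog32 3) (Real.exp_pos _)) hprod
        have h2 : 1 / ((Real.log (3/2))^3 * Real.exp (-12)) = Real.exp 12 / (Real.log (3/2))^3 := by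
          rw [Real.exp_neg]
          field_simp
        linarith
      have hmono := intervalIntegral.integral_mono_on ha2 hint intervalIntegrable_const hpt
      rw [intervalIntegral.integral_const, smul_eq_mul] at hmono
      have hc0 : 0 ≤ Real.exp 12 / (Real.log (3/2))^3 := by positivity
      have : (2 - a) * (Real.exp 12 / (Real.log (3/2))^3) ≤ K := by
        rw [hK]; nlinarith
      linarith
    have hKb : K ≤ 81 * K / (s * (Real.log (2 + 1/s))^3) := by
      rw [le_div_iff₀ hD]
      nlinarith
    have hadd : (16 + 81 * K) / (s * (Real.log (2 + 1/s))^3)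
        = 16 / (s * (Real.log (2 + 1/s))^3) + 81 * K / (s * (Real.log (2 + 1/s))^3) :=
      add_div _ _ _
    rcases le_or_gt s (Real.exp (-6)) with hcase | hcase
    · -- small s
      have ha2 : Real.exp (-6) ≤ 2 := by linarith
      have h1 : IntervalIntegrable fV volume s (Real.exp (-6)) := intInt_fV hs hcase
      have hsplit := intervalIntegral.integral_add_adjacent_intervals h1
        (intInt_fV hexp6pos ha2)
      have hI2 : (∫ u in (Real.exp (-6))..2, fV u) ≤ K := hbig _ le_rfl ha2
      have hg : IntervalIntegrable (fun u => 2 * GV' u) volume s (Real.exp (-6)) :=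
        (intInt_GV' hs hcase).const_mul 2
      have hpt : ∀ u ∈ Set.Icc s (Real.exp (-6)), fV u ≤ 2 * GV' u := by
        intro u hu
        have hu0 : 0 < u := lt_of_lt_of_le hs hu.1
        apply fV_le_two_GV' hu0
        have h6 : Real.exp 6 ≤ 1/u := by
          have h := one_div_le_one_div_of_le hu0 hu.2
          rwa [one_div (Real.exp (-6)), ← Real.exp_neg, neg_neg] at h
        calc (6:ℝ) = Real.log (Real.exp 6) := (Real.log_exp 6).symm
          _ ≤ Real.log (1 + 1/u) := Real.log_le_log (Real.exp_pos 6) (by linarith)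
      have hI1 : (∫ u in s..(Real.exp (-6)), fV u) ≤ ∫ u in s..(Real.exp (-6)), 2 * GV' u :=
        intervalIntegral.integral_mono_on hcase h1 hg hpt
      have hftc : (∫ u in s..(Real.exp (-6)), GV' u) = GV (Real.exp (-6)) - GV s :=
        intervalIntegral.integral_eq_sub_of_hasDerivAt
          (fun u hu => hasDerivAt_GV (by
            rw [Set.uIcc_of_le hcase] at hu
            exact lt_of_lt_of_le hs hu.1))
          (intInt_GV' hs hcase)
      have hconst : (∫ u in s..(Real.exp (-6)), 2 * GV' u)
          = 2 * (GV (Real.exp (-6)) - GV s) := by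
        rw [intervalIntegral.integral_const_mul, hftc]
      have hLs : 0 < Real.log (1 + 1/s) := lg_pos hs
      have hLa : 0 < Real.log (1 + 1/Real.exp (-6)) := lg_pos hexp6pos
      have hGa : GV (Real.exp (-6)) ≤ 0 := by
        unfold GV
        rw [neg_nonpos]
        positivity
      have hGs : GV s = -(s * (Real.log (1 + 1/s))^3)⁻¹ := rfl
      have hGdiff : 2 * (GV (Real.exp (-6)) - GV s) ≤ 2 * (s * (Real.log (1 + 1/s))^3)⁻¹ := by
        rw [hGs]
        have : 0 ≤ (s * (Real.log (1 + 1/s))^3)⁻¹ := by positivity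
        linarith
      have hhalf : Real.log (2 + 1/s) ≤ 2 * Real.log (1 + 1/s) := by
        have h1 : 2 + 1/s ≤ (1 + 1/s)^2 := by nlinarith
        calc Real.log (2 + 1/s) ≤ Real.log ((1 + 1/s)^2) := Real.log_le_log (by linarith) h1
          _ = 2 * Real.log (1 + 1/s) := by rw [Real.log_pow]; norm_num
      have h16 : 2 * (s * (Real.log (1 + 1/s))^3)⁻¹ ≤ 16 / (s * (Real.log (2 + 1/s))^3) :=
        h16aux hs hLs hLs2 hD hhalf
      linarith only [hsplit, hI1, hconst, hGdiff, h16, hI2, hKb, hadd]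
    · -- s not too small
      have hI : (∫ u in s..2, fV u) ≤ K := hbig s hcase.le hs2
      have h16 : 0 ≤ 16 / (s * (Real.log (2 + 1/s))^3) := by positivity
      linarith only [hI, hKb, hadd, h16]
end

section
/- There exist constants c₁, c₂ > 0 such that for all z ≤ −1 and 0 < x ≤ 1 and 0 < α < 2: c₁·|z|^{-(1+α/2)} ≤ ∫₂^∞ u^{α/2 −1} / (u + |z|)^{1+α} du ≤ c₂·|z|^{-(1+α/2)}. -/
open MeasureTheory Set

/-- `∫₂^∞ u^{α/2-1}/(u+|z|)^{1+α} du ≈ |z|^{-(1+α/2)}` for `z ≤ -1`,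
`0 < x ≤ 1` and `0 < α < 2`. -/
theorem integral_poisson_case3_comp (α : ℝ) (hα : 0 < α) (hα2 : α < 2) :
    ∃ c₁ > (0:ℝ), ∃ c₂ > (0:ℝ), ∀ z x : ℝ, z ≤ -1 → 0 < x → x ≤ 1 →
      c₁ * |z| ^ (-(1 + α/2)) ≤
        (∫ u in Set.Ioi (2:ℝ), u ^ (α/2 - 1) / (u + |z|) ^ (1 + α)) ∧
      (∫ u in Set.Ioi (2:ℝ), u ^ (α/2 - 1) / (u + |z|) ^ (1 + α)) ≤
        c₂ * |z| ^ (-(1 + α/2)) := by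
  set h : ℝ → ℝ := fun t => t ^ (α/2 - 1) * (1 + t) ^ (-(1+α)) with hh
  have hmeas : Measurable h :=
    (measurable_id.pow measurable_const).mul
      ((measurable_const.add measurable_id).pow measurable_const)
  have hpos : ∀ t : ℝ, 0 < t → 0 < h t := fun t ht =>
    mul_pos (Real.rpow_pos_of_pos ht _) (Real.rpow_pos_of_pos (by linarith) _)
  have hnonneg : ∀ s : Set ℝ, MeasurableSet s → s ⊆ Ioi 0 →
      0 ≤ᵐ[volume.restrict s] h := by
    intro s hsm hs
    exact ae_restrict_of_forall_mem hsm fun t ht => (hpos t (hs ht)).le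
  -- integrability of h on Ioi 0
  have hint : IntegrableOn h (Ioi (0:ℝ)) := by
    rw [← Ioc_union_Ioi_eq_Ioi (zero_le_one (α := ℝ)), integrableOn_union]
    constructor
    · -- on Ioc 0 1, bound by t ^ (α/2 - 1)
      have hb : IntegrableOn (fun t : ℝ => t ^ (α/2 - 1)) (Ioc (0:ℝ) 1) := by
        have := (intervalIntegral.intervalIntegrable_rpow' (a := 0) (b := 1)
          (r := α/2 - 1) (by linarith))
        rwa [intervalIntegrable_iff_integrableOn_Ioc_of_le zero_le_one] at this
      refine hb.mono' (hmeas.aestronglyMeasurable.restrict) ?_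
      refine ae_restrict_of_forall_mem measurableSet_Ioc fun t ht => ?_
      have ht0 : 0 < t := ht.1
      rw [Real.norm_eq_abs, abs_of_nonneg (hpos t ht0).le]
      have h1 : (1 + t) ^ (-(1+α)) ≤ 1 :=
        Real.rpow_le_one_of_one_le_of_nonpos (by linarith) (by linarith)
      calc h t ≤ t ^ (α/2 - 1) * 1 := by
            have := Real.rpow_nonneg ht0.le (α/2 - 1)
            exact mul_le_mul_of_nonneg_left h1 this
        _ = t ^ (α/2 - 1) := mul_one _
    · -- on Ioi 1, bound by t ^ (-(2 + α/2))
      have hb : IntegrableOn (fun t : ℝ => t ^ (-(2 + α/2))) (Ioi (1:ℝ)) :=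
        integrableOn_Ioi_rpow_of_lt (by linarith) one_pos
      refine hb.mono' (hmeas.aestronglyMeasurable.restrict) ?_
      refine ae_restrict_of_forall_mem measurableSet_Ioi fun t ht => ?_
      have ht1 : (1:ℝ) < t := ht
      have ht0 : 0 < t := by linarith
      rw [Real.norm_eq_abs, abs_of_nonneg (hpos t ht0).le]
      have h1 : (1 + t) ^ (-(1+α)) ≤ t ^ (-(1+α)) :=
        Real.rpow_le_rpow_of_nonpos ht0 (by linarith) (by linarith)
      calc h t ≤ t ^ (α/2 - 1) * t ^ (-(1+α)) :=
            mul_le_mul_of_nonneg_left h1 (Real.rpow_nonneg ht0.le _)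
        _ = t ^ (-(2 + α/2)) := by
            rw [← Real.rpow_add ht0]; ring_nf
  set c₁ : ℝ := ∫ t in Ioi (2:ℝ), h t with hc₁
  set c₂ : ℝ := ∫ t in Ioi (0:ℝ), h t with hc₂
  have hsub2 : Ioi (2:ℝ) ⊆ Ioi (0:ℝ) := Ioi_subset_Ioi (by norm_num)
  have hc₁pos : 0 < c₁ := by
    rw [hc₁, setIntegral_pos_iff_support_of_nonneg_ae
      (hnonneg _ measurableSet_Ioi hsub2) (hint.mono_set hsub2)]
    have : Ioi (2:ℝ) ⊆ Function.support h ∩ Ioi 2 := fun t ht =>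
      ⟨(hpos t (hsub2 ht)).ne', ht⟩
    calc (0:ENNReal) < volume (Ioi (2:ℝ)) := by simp [Real.volume_Ioi]
      _ ≤ _ := measure_mono this
  have hc₂pos : 0 < c₂ := by
    rw [hc₂, setIntegral_pos_iff_support_of_nonneg_ae
      (hnonneg _ measurableSet_Ioi subset_rfl) hint]
    have : Ioi (0:ℝ) ⊆ Function.support h ∩ Ioi 0 := fun t ht =>
      ⟨(hpos t ht).ne', ht⟩
    calc (0:ENNReal) < volume (Ioi (0:ℝ)) := by simp [Real.volume_Ioi]
      _ ≤ _ := measure_mono this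
  refine ⟨c₁, hc₁pos, c₂, hc₂pos, fun z x hz hx hx1 => ?_⟩
  set r : ℝ := |z| with hr
  have hr1 : 1 ≤ r := by
    rw [hr, abs_of_nonpos (by linarith)]; linarith
  have hr0 : 0 < r := by linarith
  -- the substitution u = r * t
  have key : (∫ u in Set.Ioi (2:ℝ), u ^ (α/2 - 1) / (u + r) ^ (1 + α))
      = r ^ (-(1 + α/2)) * ∫ t in Ioi (2/r), h t := by
    have hsubst := integral_comp_mul_left_Ioi
      (fun u : ℝ => u ^ (α/2 - 1) / (u + r) ^ (1 + α)) (2/r) hr0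
    rw [mul_div_cancel₀ _ hr0.ne'] at hsubst
    have hcongr : (∫ t in Ioi (2/r), (r * t) ^ (α/2 - 1) / (r * t + r) ^ (1 + α))
        = ∫ t in Ioi (2/r), r ^ (-(2 + α/2)) * h t := by
      refine setIntegral_congr_fun measurableSet_Ioi fun t ht => ?_
      have ht0 : 0 < t := lt_trans (by positivity) ht
      have h1t : (0:ℝ) < 1 + t := by linarith
      have e1 : r * t + r = r * (1 + t) := by ring
      rw [e1, Real.mul_rpow hr0.le ht0.le, Real.mul_rpow hr0.le h1t.le]
      rw [div_eq_mul_inv, mul_inv, hh]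
      rw [← Real.rpow_neg hr0.le, ← Real.rpow_neg h1t.le]
      have : r ^ (α/2 - 1) * t ^ (α/2 - 1) * (r ^ (-(1+α)) * (1 + t) ^ (-(1+α)))
          = (r ^ (α/2 - 1) * r ^ (-(1+α))) * (t ^ (α/2 - 1) * (1 + t) ^ (-(1+α))) := by
        ring
      rw [this, ← Real.rpow_add hr0]
      have he : α/2 - 1 + -(1+α) = -(2 + α/2) := by ring
      rw [he]
    rw [hcongr, integral_const_mul, smul_eq_mul] at hsubst
    have hI : (∫ u in Set.Ioi (2:ℝ), u ^ (α/2 - 1) / (u + r) ^ (1 + α))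
        = r * (r ^ (-(2 + α/2)) * ∫ t in Ioi (2/r), h t) := by
      rw [hsubst, ← mul_assoc, mul_inv_cancel₀ hr0.ne', one_mul]
    rw [hI, ← mul_assoc]
    congr 1
    have he2 : -(2 + α/2) + 1 = -(1 + α/2) := by ring
    rw [mul_comm r, ← Real.rpow_add_one hr0.ne', he2]
  have hsubr : Ioi (2/r) ⊆ Ioi (0:ℝ) := Ioi_subset_Ioi (by positivity)
  have hJ1 : c₁ ≤ ∫ t in Ioi (2/r), h t := by
    refine setIntegral_mono_set (hint.mono_set hsubr)
      (hnonneg _ measurableSet_Ioi hsubr) ?_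
    exact HasSubset.Subset.eventuallyLE (Ioi_subset_Ioi (div_le_self (by norm_num) hr1))
  have hJ2 : (∫ t in Ioi (2/r), h t) ≤ c₂ := by
    refine setIntegral_mono_set hint (hnonneg _ measurableSet_Ioi subset_rfl) ?_
    exact HasSubset.Subset.eventuallyLE hsubr
  have hrp : 0 < r ^ (-(1 + α/2)) := Real.rpow_pos_of_pos hr0 _
  constructor
  · rw [key, mul_comm c₁]
    exact mul_le_mul_of_nonneg_left hJ1 hrp.le
  · rw [key, mul_comm c₂]
    exact mul_le_mul_of_nonneg_left hJ2 hrp.le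
end
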